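/- arXiv:1907.03875 — 3 statements merged into one kernel-verified Lean document; each statement's English description precedes it below -/
import Mathlib

section
/- Let I be a cell with ρ_I > 0. Then for every t > 0, P( ‖ĉ_I − c_I‖ > t ) ≤ 2 exp( −n ρ_I t² / 8 ), where ĉ_I is the empirical center of mass of the cell I and c_I its population center of mass. -/
open MeasureTheory Set ProbabilityTheory
open scoped BigOperators ENNReal NNReal

attribute [local instance] Classical.propDecidable

noncomputable section

/-- Euclidean space `ℝ^D`. -/
abbrev Euc (D : ℕ) : Type := EuclideanSpace ℝ (Fin D)

/-- A partition tree on a subset `X` of `ℝ^D`, with branching number at most `a`.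
Cells are abstract nodes; `cset I` is the subset of `ℝ^D` associated with the cell `I`,
`depth I` its depth, `parent I` its parent. -/
structure PartitionTree (D : ℕ) (X : Set (Euc D)) (a : ℕ) : Type 1 where
  Cell : Type
  cellCountable : Countable Cell
  cset : Cell → Set (Euc D)
  depth : Cell → ℕ
  parent : Cell → Cell
  root : Cell
  root_cset : cset root = X
  depth_root : depth root = 0
  parent_root : parent root = root
  eq_root_of_depth_eq_zero : ∀ I, depth I = 0 → I = root
  depth_parent : ∀ I, I ≠ root → depth (parent I) + 1 = depth I
  level_finite : ∀ j : ℕ, {I | depth I = j}.Finite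
  level_cover : ∀ j : ℕ, ⋃ I ∈ {I | depth I = j}, cset I = X
  level_disjoint : ∀ I J, depth I = depth J → I ≠ J → Disjoint (cset I) (cset J)
  cset_measurable : ∀ I, MeasurableSet (cset I)
  cset_eq_iUnion_children : ∀ I, cset I = ⋃ J ∈ {J | parent J = I ∧ J ≠ root}, cset J
  ncard_children_le : ∀ I, {J | parent J = I ∧ J ≠ root}.ncard ≤ a

namespace PartitionTree

variable {D : ℕ} {X : Set (Euc D)} {a : ℕ} (T : PartitionTree D X a)

/-- The children of a cell. -/
def children (I : T.Cell) : Set T.Cell := {J | T.parent J = I ∧ J ≠ T.root}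

/-- `descend k I` is the set `𝒞^k(I)` of `k`-th generation descendants of `I`. -/
def descend : ℕ → T.Cell → Set T.Cell
  | 0, I => {I}
  | k + 1, I => ⋃ J ∈ descend k I, T.children J

/-- A subtree: a family of cells containing the parent of each of its cells. -/
def IsSubtree (S : Set T.Cell) : Prop := ∀ I ∈ S, T.parent I ∈ S

/-- The outer leaves `Λ(𝒯)` of a subtree `𝒯`. -/
def outerLeaves (S : Set T.Cell) : Set T.Cell := {I | I ∉ S ∧ T.parent I ∈ S}

end PartitionTree

/-- The essential diameter of a set `I` with respect to the measure `ρ`: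
`ediam ρ I = inf { diam (I \ J) | J ⊆ I Borel, ρ J = 0 }`. -/
def ediam {D : ℕ} (ρ : Measure (Euc D)) (I : Set (Euc D)) : ℝ :=
  ⨅ J : {J : Set (Euc D) // MeasurableSet J ∧ J ⊆ I ∧ ρ J = 0},
    Metric.diam (I \ (J : Set (Euc D)))

namespace PartitionTree

variable {D : ℕ} {X : Set (Euc D)} {a : ℕ} (T : PartitionTree D X a)
  (ρ : Measure (Euc D)) (xstar : T.Cell → Euc D)

/-- The (population) center of mass `c_I` of a cell: `ρ(I)⁻¹ ∫_I x dρ(x)` if `ρ(I) > 0`,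
and the arbitrary fixed point `xstar I` otherwise. -/
def center (I : T.Cell) : Euc D :=
  if ρ (T.cset I) ≠ 0 then (ρ (T.cset I)).toReal⁻¹ • ∫ x in T.cset I, x ∂ρ else xstar I

/-- The local expected distortion `ℰ_I = ∫_I ‖x - c_I‖² dρ(x)`. -/
def cellErr (I : T.Cell) : ℝ := ∫ x in T.cset I, ‖x - T.center ρ xstar I‖ ^ 2 ∂ρ

/-- `ε_I² = ℰ_I - ∑_{J ∈ 𝒞(I)} ℰ_J`. -/
def epsSq (I : T.Cell) : ℝ :=
  T.cellErr ρ xstar I - ∑ᶠ J ∈ T.children I, T.cellErr ρ xstar J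

/-- `ε_I ≥ 0`, defined by `ε_I² = ℰ_I - ∑_{J ∈ 𝒞(I)} ℰ_J`. -/
def eps (I : T.Cell) : ℝ := Real.sqrt (T.epsSq ρ xstar I)

/-- The subtree `𝒯_η`. -/
def Teta (η : ℝ) : Set T.Cell :=
  if ∀ I, T.eps ρ xstar I < η then {T.root}
  else {I | ∃ k, ∃ J ∈ T.descend k I, η ≤ T.eps ρ xstar J}

/-- The nonlinear projection `P_Λ(x) = ∑_{I ∈ Λ} c_I 1_I(x)` associated with a family of
cells `Λ` and code vectors `c`. -/
def proj (c : T.Cell → Euc D) (Λ : Set T.Cell) (x : Euc D) : Euc D :=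
  ∑ᶠ I ∈ Λ, (T.cset I).indicator (fun _ => c I) x

variable {n : ℕ}

/-- The number `n_I` of sample points lying in the cell `I`. -/
def empCount (x : Fin n → Euc D) (I : T.Cell) : ℕ := {i | x i ∈ T.cset I}.ncard

/-- The empirical center of mass `ĉ_I` of a cell: the average of the sample points lying in
`I` if there are any, and the arbitrary fixed point `xhat I` otherwise. -/
def empCenter (xhat : T.Cell → Euc D) (x : Fin n → Euc D) (I : T.Cell) : Euc D :=
  if T.empCount x I ≠ 0 then
    ((T.empCount x I : ℝ))⁻¹ • ∑ᶠ i ∈ {i : Fin n | x i ∈ T.cset I}, x i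
  else xhat I

/-- The empirical local distortion `Ê_I = n⁻¹ ∑_{i : X_i ∈ I} ‖X_i - ĉ_I‖²`. -/
def empErr (xhat : T.Cell → Euc D) (x : Fin n → Euc D) (I : T.Cell) : ℝ :=
  (n : ℝ)⁻¹ * ∑ᶠ i ∈ {i : Fin n | x i ∈ T.cset I}, ‖x i - T.empCenter xhat x I‖ ^ 2

/-- `ε̂_I² = Ê_I - ∑_{J ∈ 𝒞(I)} Ê_J`. -/
def empEpsSq (xhat : T.Cell → Euc D) (x : Fin n → Euc D) (I : T.Cell) : ℝ :=
  T.empErr xhat x I - ∑ᶠ J ∈ T.children I, T.empErr xhat x J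

/-- `ε̂_I ≥ 0`, defined by `ε̂_I² = Ê_I - ∑_{J ∈ 𝒞(I)} Ê_J`. -/
def empEps (xhat : T.Cell → Euc D) (x : Fin n → Euc D) (I : T.Cell) : ℝ :=
  Real.sqrt (T.empEpsSq xhat x I)

/-- The empirical subtree `T̂_η`, truncated at depth `jn`. -/
def empTeta (xhat : T.Cell → Euc D) (x : Fin n → Euc D) (jn : ℕ) (η : ℝ) : Set T.Cell :=
  if ∀ I, T.depth I ≤ jn → T.empEps xhat x I < η then {T.root}
  else {I | ∃ k, ∃ J ∈ T.descend k I, T.depth J ≤ jn ∧ η ≤ T.empEps xhat x J}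

end PartitionTree

/-- Assumption A: `ediam(I) ≤ C₁ ρ(I)^s` and `ediam(I) ≤ C₂ b^{-j_I}` for every cell `I`. -/
def AssumptionA {D : ℕ} {X : Set (Euc D)} {a : ℕ} (T : PartitionTree D X a)
    (ρ : Measure (Euc D)) (b s C₁ C₂ : ℝ) : Prop :=
  ∀ I : T.Cell,
    ediam ρ (T.cset I) ≤ C₁ * (ρ (T.cset I)).toReal ^ s ∧
    ediam ρ (T.cset I) ≤ C₂ * b ^ (-(T.depth I : ℝ))


section AuxHoeffding

lemma hasSum_cosh_sqrt (l : ℝ) {s : ℝ} (hs : 0 ≤ s) :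
    HasSum (fun k : ℕ => (l ^ 2 * s) ^ k / (Nat.factorial (2 * k) : ℝ))
      (Real.cosh (l * Real.sqrt s)) := by
  have h := Real.hasSum_cosh (l * Real.sqrt s)
  convert h using 2 with k
  rw [pow_mul, mul_pow l (Real.sqrt s), Real.sq_sqrt hs, mul_pow]

lemma convexOn_cosh_sqrt (l : ℝ) :
    ConvexOn ℝ (Set.Ici (0:ℝ)) (fun s => Real.cosh (l * Real.sqrt s)) := by
  refine ⟨convex_Ici 0, fun x hx y hy a b ha hb hab => ?_⟩
  have hx' : (0:ℝ) ≤ x := hx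
  have hy' : (0:ℝ) ≤ y := hy
  simp only [smul_eq_mul]
  have hz : (0:ℝ) ≤ a * x + b * y := by
    have := mul_nonneg ha hx'
    have := mul_nonneg hb hy'
    linarith
  have h1 := hasSum_cosh_sqrt l hz
  have h2 := (hasSum_cosh_sqrt l hx').mul_left a
  have h3 := (hasSum_cosh_sqrt l hy').mul_left b
  refine hasSum_le (fun k => ?_) h1 (h2.add h3)
  have hpow := (convexOn_pow k).2 (Set.mem_Ici.2 (by positivity : (0:ℝ) ≤ l^2*x))
    (Set.mem_Ici.2 (by positivity : (0:ℝ) ≤ l^2*y)) ha hb hab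
  simp only [smul_eq_mul] at hpow ⊢
  have hfac : (0:ℝ) < (Nat.factorial (2*k) : ℝ) := by positivity
  have heq : l ^ 2 * (a * x + b * y) = a * (l^2*x) + b * (l^2*y) := by ring
  rw [heq, div_le_iff₀ hfac]
  calc (a * (l ^ 2 * x) + b * (l ^ 2 * y)) ^ k ≤ a * (l^2*x)^k + b * (l^2*y)^k := hpow
    _ = (a * ((l ^ 2 * x) ^ k / (Nat.factorial (2*k) : ℝ)) +
          b * ((l ^ 2 * y) ^ k / (Nat.factorial (2*k) : ℝ))) * (Nat.factorial (2*k) : ℝ) := by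
        field_simp

lemma cosh_sqrt_mono {l : ℝ} (hl : 0 ≤ l) {s u : ℝ} (hsu : s ≤ u) :
    Real.cosh (l * Real.sqrt s) ≤ Real.cosh (l * Real.sqrt u) := by
  rw [Real.cosh_le_cosh, abs_of_nonneg (by positivity), abs_of_nonneg (by positivity)]
  exact mul_le_mul_of_nonneg_left (Real.sqrt_le_sqrt hsu) hl

lemma chord_bound {l r u : ℝ} (hl : 0 ≤ l) (hr : 0 < r) (hu : |u| ≤ 2 * r) :
    Real.cosh (l * Real.sqrt (r^2 + u + 1)) ≤
      ((2*r - u) * Real.cosh (l * (r - 1)) + (2*r + u) * Real.cosh (l * (r + 1))) / (4 * r) := by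
  have hu1 : -(2*r) ≤ u := neg_le_of_abs_le hu
  have hu2 : u ≤ 2*r := le_of_abs_le hu
  have ha : (0:ℝ) ≤ (2*r - u) / (4*r) := by
    apply div_nonneg (by linarith) (by linarith)
  have hb : (0:ℝ) ≤ (2*r + u) / (4*r) := by
    apply div_nonneg (by linarith) (by linarith)
  have hab : (2*r - u) / (4*r) + (2*r + u) / (4*r) = 1 := by
    field_simp; ring
  have hmem1 : ((r-1)^2 : ℝ) ∈ Set.Ici (0:ℝ) := Set.mem_Ici.2 (sq_nonneg _)
  have hmem2 : ((r+1)^2 : ℝ) ∈ Set.Ici (0:ℝ) := Set.mem_Ici.2 (sq_nonneg _)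
  have hkey := (convexOn_cosh_sqrt l).2 hmem1 hmem2 ha hb hab
  simp only [smul_eq_mul] at hkey
  have hcomb : (2*r - u) / (4*r) * (r-1)^2 + (2*r + u) / (4*r) * (r+1)^2 = r^2 + u + 1 := by
    field_simp; ring
  rw [hcomb] at hkey
  have hs1 : Real.sqrt ((r-1)^2) = |r - 1| := Real.sqrt_sq_eq_abs _
  have hs2 : Real.sqrt ((r+1)^2) = |r + 1| := Real.sqrt_sq_eq_abs _
  have hc1 : Real.cosh (l * Real.sqrt ((r-1)^2)) = Real.cosh (l * (r-1)) := by
    rw [hs1, show l * |r-1| = |l*(r-1)| by rw [abs_mul, abs_of_nonneg hl], Real.cosh_abs]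
  have hc2 : Real.cosh (l * Real.sqrt ((r+1)^2)) = Real.cosh (l * (r+1)) := by
    rw [hs2, show l * |r+1| = |l*(r+1)| by rw [abs_mul, abs_of_nonneg hl], Real.cosh_abs]
  rw [hc1, hc2] at hkey
  calc Real.cosh (l * Real.sqrt (r^2 + u + 1)) ≤
      (2*r - u) / (4*r) * Real.cosh (l * (r-1)) + (2*r + u) / (4*r) * Real.cosh (l * (r+1)) := hkey
    _ = ((2*r - u) * Real.cosh (l * (r - 1)) + (2*r + u) * Real.cosh (l * (r + 1))) / (4 * r) := by
        ring

lemma cosh_sum_eq (A B : ℝ) :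
    Real.cosh (A - B) + Real.cosh (A + B) = 2 * Real.cosh A * Real.cosh B := by
  rw [Real.cosh_add, Real.cosh_sub]; ring

lemma exp_neg_le_one_sub_half {x : ℝ} (hx0 : 0 ≤ x) (hx1 : x ≤ 1) :
    Real.exp (-x) ≤ 1 - x / 2 := by
  have h1 : 1 + x ≤ Real.exp x := by have := Real.add_one_le_exp x; linarith
  have h2 : Real.exp (-x) = (Real.exp x)⁻¹ := Real.exp_neg x
  have h3 : (0:ℝ) < Real.exp x := Real.exp_pos x
  have h4 : (0:ℝ) < 1 + x := by linarith
  rw [h2]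
  have h5 : (Real.exp x)⁻¹ ≤ (1 + x)⁻¹ := by
    apply inv_anti₀ h4 h1
  have h6 : (1 + x)⁻¹ ≤ 1 - x / 2 := by
    rw [inv_le_iff_one_le_mul₀ h4]
    nlinarith
  linarith


lemma stepA {D : ℕ} (ρ : Measure (Euc D)) [IsProbabilityMeasure ρ]
    {S : Set (Euc D)} (hS : MeasurableSet S) (c : Euc D)
    (hbound : ∀ w ∈ S, ‖w - c‖ ≤ 1)
    (hmean : ∫ w in S, (w - c) ∂ρ = 0)
    {l : ℝ} (hl : 0 ≤ l) (x : Euc D) :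
    ∫⁻ w in S, ENNReal.ofReal (Real.cosh (l * ‖x + (w - c)‖)) ∂ρ ≤
      ENNReal.ofReal ((ρ S).toReal * (Real.exp (l^2/2) * Real.cosh (l * ‖x‖))) := by
  set p : ℝ := (ρ S).toReal with hp
  have hp0 : 0 ≤ p := ENNReal.toReal_nonneg
  have hSfin : ρ S ≠ ⊤ := measure_ne_top ρ S
  have hρS : ρ S = ENNReal.ofReal p := (ENNReal.ofReal_toReal hSfin).symm
  have hcoshexp : Real.cosh l ≤ Real.exp (l^2/2) := by
    have := Real.cosh_le_exp_half_sq l; simpa using this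
  have hIntW : Integrable (fun w => w - c) (ρ.restrict S) := by
    refine ⟨(continuous_id.sub continuous_const).aestronglyMeasurable, ?_⟩
    apply HasFiniteIntegral.of_bounded (C := 1)
    filter_upwards [ae_restrict_mem hS] with w hw using hbound w hw
  rcases eq_or_lt_of_le (norm_nonneg x) with hx0 | hxpos
  · -- x = 0 case
    have hxz : ‖x‖ = 0 := hx0.symm
    have hx' : x = 0 := norm_eq_zero.1 hxz
    calc ∫⁻ w in S, ENNReal.ofReal (Real.cosh (l * ‖x + (w - c)‖)) ∂ρ
        ≤ ∫⁻ _ in S, ENNReal.ofReal (Real.cosh l) ∂ρ := by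
          refine setLIntegral_mono (by fun_prop) (fun w hw => ?_)
          apply ENNReal.ofReal_le_ofReal
          rw [Real.cosh_le_cosh, hx', zero_add]
          rw [abs_of_nonneg (by positivity), abs_of_nonneg hl]
          calc l * ‖w - c‖ ≤ l * 1 := mul_le_mul_of_nonneg_left (hbound w hw) hl
            _ = l := mul_one l
      _ = ENNReal.ofReal (Real.cosh l) * ρ S := by
          rw [setLIntegral_const]
      _ = ENNReal.ofReal (Real.cosh l * p) := by
          rw [hρS, ← ENNReal.ofReal_mul (Real.cosh_pos l).le]
      _ ≤ ENNReal.ofReal (p * (Real.exp (l^2/2) * Real.cosh (l * ‖x‖))) := by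
          apply ENNReal.ofReal_le_ofReal
          rw [hxz, mul_zero, Real.cosh_zero, mul_one, mul_comm]
          exact mul_le_mul_of_nonneg_left hcoshexp hp0
  · -- x ≠ 0 case
    set r : ℝ := ‖x‖ with hr
    set C₁ : ℝ := Real.cosh (l * (r - 1)) with hC₁
    set C₂ : ℝ := Real.cosh (l * (r + 1)) with hC₂
    have hrne : r ≠ 0 := ne_of_gt hxpos
    set a0 : ℝ := (C₁ + C₂) / 2 with ha0
    set b0 : ℝ := (C₂ - C₁) / (2 * r) with hb0
    set g : Euc D → ℝ := fun w => a0 + b0 * inner ℝ x (w - c) with hg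
    have hgcont : Continuous g := by
      apply continuous_const.add
      apply continuous_const.mul
      exact continuous_const.inner (continuous_id.sub continuous_const)
    have hinner_le : ∀ w ∈ S, |2 * (inner ℝ x (w - c) : ℝ)| ≤ 2 * r := by
      intro w hw
      rw [abs_mul, abs_two]
      refine mul_le_mul_of_nonneg_left ?_ (by norm_num)
      calc |(inner ℝ x (w - c) : ℝ)| ≤ ‖x‖ * ‖w - c‖ := abs_real_inner_le_norm x (w - c)
        _ ≤ r * 1 := mul_le_mul_of_nonneg_left (hbound w hw) (norm_nonneg x)
        _ = r := mul_one r
    have hptwise : ∀ w ∈ S,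
        Real.cosh (l * ‖x + (w - c)‖) ≤ g w := by
      intro w hw
      have h1 : ‖x + (w - c)‖ = Real.sqrt (‖x + (w - c)‖^2) := by
        rw [Real.sqrt_sq (norm_nonneg _)]
      have h2 : ‖x + (w - c)‖^2 ≤ r^2 + 2 * inner ℝ x (w - c) + 1 := by
        rw [norm_add_sq_real]
        have := hbound w hw
        have h3 : ‖w - c‖^2 ≤ 1 := by nlinarith [norm_nonneg (w - c)]
        nlinarith
      have hchord := chord_bound hl hxpos (hinner_le w hw)
      have heq : ((2*r - 2 * inner ℝ x (w - c)) * C₁ + (2*r + 2 * inner ℝ x (w - c)) * C₂) / (4 * r)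
          = g w := by
        rw [hg, ha0, hb0]; field_simp; ring
      calc Real.cosh (l * ‖x + (w - c)‖)
          = Real.cosh (l * Real.sqrt (‖x + (w - c)‖^2)) := by rw [← h1]
        _ ≤ Real.cosh (l * Real.sqrt (r^2 + 2 * inner ℝ x (w - c) + 1)) :=
            cosh_sqrt_mono hl h2
        _ ≤ g w := heq ▸ hchord
    have hIntInner : Integrable (fun w => (inner ℝ x (w - c) : ℝ)) (ρ.restrict S) :=
      hIntW.const_inner x
    have hIntg : Integrable g (ρ.restrict S) :=
      (integrable_const a0).add (hIntInner.const_mul b0)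
    have hg0 : ∀ w ∈ S, 0 ≤ g w := fun w hw =>
      le_trans (Real.cosh_pos _).le (hptwise w hw)
    have hIZ : ∫ w in S, (inner ℝ x (w - c) : ℝ) ∂ρ = 0 := by
      rw [integral_inner hIntW, hmean, inner_zero_right]
    have hIg : ∫ w in S, g w ∂ρ = p * a0 := by
      rw [hg, integral_add (integrable_const a0) (hIntInner.const_mul b0),
        integral_const_mul, hIZ, setIntegral_const]
      simp only [Measure.restrict_apply_univ, measureReal_def, mul_zero, add_zero, smul_eq_mul, ← hp]
    calc ∫⁻ w in S, ENNReal.ofReal (Real.cosh (l * ‖x + (w - c)‖)) ∂ρ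
        ≤ ∫⁻ w in S, ENNReal.ofReal (g w) ∂ρ := by
          refine setLIntegral_mono ?_ (fun w hw => ENNReal.ofReal_le_ofReal (hptwise w hw))
          exact ENNReal.continuous_ofReal.comp hgcont |>.measurable
      _ = ENNReal.ofReal (∫ w in S, g w ∂ρ) := by
          rw [← ofReal_integral_eq_lintegral_ofReal hIntg]
          filter_upwards [ae_restrict_mem hS] with w hw using hg0 w hw
      _ = ENNReal.ofReal (p * a0) := by rw [hIg]
      _ ≤ ENNReal.ofReal (p * (Real.exp (l^2/2) * Real.cosh (l * ‖x‖))) := by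
          apply ENNReal.ofReal_le_ofReal
          apply mul_le_mul_of_nonneg_left _ hp0
          have hsum : C₁ + C₂ = 2 * Real.cosh (l * r) * Real.cosh l := by
            rw [hC₁, hC₂, show l * (r - 1) = l * r - l by ring,
              show l * (r + 1) = l * r + l by ring, Real.cosh_sub, Real.cosh_add]
            ring
          rw [ha0, hsum]
          calc 2 * Real.cosh (l * r) * Real.cosh l / 2 = Real.cosh (l * r) * Real.cosh l := by
                ring
            _ ≤ Real.exp (l^2/2) * Real.cosh (l * r) := by
                rw [mul_comm]
                exact mul_le_mul_of_nonneg_right hcoshexp (Real.cosh_pos _).le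
            _ = Real.exp (l^2/2) * Real.cosh (l * ‖x‖) := rfl

lemma measurable_stepB {D n : ℕ} {S : Set (Euc D)} (hS : MeasurableSet S)
    (c : Euc D) (l : ℝ) (ε : Fin n → Bool) (x : Euc D) :
    Measurable (fun v : Fin n → Euc D =>
      (∏ i, (if ε i then S else Sᶜ).indicator (fun _ => (1:ℝ≥0∞)) (v i)) *
        ENNReal.ofReal (Real.cosh (l * ‖x + ∑ i, (if ε i then v i - c else 0)‖))) := by
  apply Measurable.mul
  · apply Finset.measurable_prod
    intro i _
    have hms : MeasurableSet (if ε i then S else Sᶜ) := by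
      cases ε i <;> simp [hS, hS.compl]
    exact (measurable_one.indicator hms).comp (measurable_pi_apply i)
  · apply (ENNReal.continuous_ofReal.comp (Real.continuous_cosh.comp
      (continuous_const.mul (Continuous.norm (continuous_const.add
        (continuous_finset_sum _ fun i _ => ?_)))))).measurable
    cases ε i
    · simpa using continuous_const
    · simp
      exact (continuous_apply i).sub continuous_const

lemma stepB {D : ℕ} (ρ : Measure (Euc D)) [IsProbabilityMeasure ρ]
    {S : Set (Euc D)} (hS : MeasurableSet S) (c : Euc D)
    (hbound : ∀ w ∈ S, ‖w - c‖ ≤ 1)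
    (hmean : ∫ w in S, (w - c) ∂ρ = 0)
    {l : ℝ} (hl : 0 ≤ l) :
    ∀ (n : ℕ) (ε : Fin n → Bool) (x : Euc D),
    ∫⁻ v : Fin n → Euc D,
        (∏ i, (if ε i then S else Sᶜ).indicator (fun _ => (1:ℝ≥0∞)) (v i)) *
          ENNReal.ofReal (Real.cosh (l * ‖x + ∑ i, (if ε i then v i - c else 0)‖))
        ∂(Measure.pi fun _ => ρ) ≤
      (∏ i, if ε i then ENNReal.ofReal ((ρ S).toReal * Real.exp (l^2/2)) else ρ Sᶜ) *
        ENNReal.ofReal (Real.cosh (l * ‖x‖)) := by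
  intro n
  induction n with
  | zero =>
    intro ε x
    simp only [Finset.univ_eq_empty, Finset.prod_empty, Finset.sum_empty, one_mul, add_zero]
    rw [lintegral_const]
    simp
  | succ n IH =>
    intro ε x
    -- transfer to the product measure
    have hMP := measurePreserving_piFinSuccAbove (fun _ : Fin (n+1) => ρ) 0
    set T := MeasurableEquiv.piFinSuccAbove (fun _ : Fin (n+1) => Euc D) 0 with hT
    set F : (Fin (n+1) → Euc D) → ℝ≥0∞ := fun v =>
      (∏ i, (if ε i then S else Sᶜ).indicator (fun _ => (1:ℝ≥0∞)) (v i)) *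
        ENNReal.ofReal (Real.cosh (l * ‖x + ∑ i, (if ε i then v i - c else 0)‖)) with hF
    have hFmeas : Measurable F := measurable_stepB hS c l ε x
    have htrans : ∫⁻ v, F v ∂(Measure.pi fun _ => ρ) =
        ∫⁻ z, F (T.symm z) ∂(ρ.prod (Measure.pi fun _ : Fin n => ρ)) := by
      have h2 := hMP.lintegral_comp (hFmeas.comp T.symm.measurable)
      simp only [Function.comp_apply, MeasurableEquiv.symm_apply_apply] at h2
      exact h2
    set ε' : Fin n → Bool := fun j => ε (Fin.succ j) with hε'
    have hFval : ∀ (w : Euc D) (v : Fin n → Euc D), F (T.symm (w, v)) =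
        (if ε 0 then S else Sᶜ).indicator (fun _ => (1:ℝ≥0∞)) w *
          ((∏ j : Fin n, (if ε' j then S else Sᶜ).indicator (fun _ => (1:ℝ≥0∞)) (v j)) *
            ENNReal.ofReal (Real.cosh (l * ‖(x + (if ε 0 then w - c else 0)) +
              ∑ j : Fin n, (if ε' j then v j - c else 0)‖))) := by
      intro w v
      have hins : (T.symm (w, v) : Fin (n+1) → Euc D) = Fin.cons w v := by
        have hins0 : (T.symm (w, v) : Fin (n+1) → Euc D) = Fin.insertNth 0 w v := rfl
        rw [hins0, Fin.insertNth_zero']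
      rw [hF, hins]
      simp only [Fin.prod_univ_succ, Fin.sum_univ_succ, Fin.cons_zero, Fin.cons_succ]
      rw [mul_assoc, add_assoc]
    have hinner : ∀ w : Euc D,
        ∫⁻ v, F (T.symm (w, v)) ∂(Measure.pi fun _ : Fin n => ρ) ≤
          (if ε 0 then S else Sᶜ).indicator (fun _ => (1:ℝ≥0∞)) w *
            ((∏ j : Fin n, if ε' j then ENNReal.ofReal ((ρ S).toReal * Real.exp (l^2/2)) else ρ Sᶜ) *
              ENNReal.ofReal (Real.cosh (l * ‖x + (if ε 0 then w - c else 0)‖))) := by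
      intro w
      have hrw : ∀ v : Fin n → Euc D, F (T.symm (w, v)) =
          (if ε 0 then S else Sᶜ).indicator (fun _ => (1:ℝ≥0∞)) w *
            ((∏ j : Fin n, (if ε' j then S else Sᶜ).indicator (fun _ => (1:ℝ≥0∞)) (v j)) *
              ENNReal.ofReal (Real.cosh (l * ‖(x + (if ε 0 then w - c else 0)) +
                ∑ j : Fin n, (if ε' j then v j - c else 0)‖))) := fun v => hFval w v
      rw [lintegral_congr hrw]
      rw [lintegral_const_mul' _ _ (by
        by_cases hw : w ∈ (if ε 0 then S else Sᶜ) <;> simp [hw])]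
      exact mul_le_mul_right (IH ε' (x + (if ε 0 then w - c else 0))) _
    have hprodint : ∫⁻ z, F (T.symm z) ∂(ρ.prod (Measure.pi fun _ : Fin n => ρ)) =
        ∫⁻ w, ∫⁻ v, F (T.symm (w, v)) ∂(Measure.pi fun _ : Fin n => ρ) ∂ρ := by
      exact lintegral_prod _ (hFmeas.comp T.symm.measurable).aemeasurable
    rw [htrans, hprodint]
    set Cε' : ℝ≥0∞ :=
      ∏ j : Fin n, if ε' j then ENNReal.ofReal ((ρ S).toReal * Real.exp (l^2/2)) else ρ Sᶜ with hCε'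
    have houter : ∫⁻ w, ∫⁻ v, F (T.symm (w, v)) ∂(Measure.pi fun _ : Fin n => ρ) ∂ρ ≤
        ∫⁻ w, (if ε 0 then S else Sᶜ).indicator (fun _ => (1:ℝ≥0∞)) w *
          (Cε' * ENNReal.ofReal (Real.cosh (l * ‖x + (if ε 0 then w - c else 0)‖))) ∂ρ :=
      lintegral_mono hinner
    refine le_trans houter ?_
    have hsplit : (∏ i : Fin (n+1), if ε i then ENNReal.ofReal ((ρ S).toReal * Real.exp (l^2/2)) else ρ Sᶜ)
        = (if ε 0 then ENNReal.ofReal ((ρ S).toReal * Real.exp (l^2/2)) else ρ Sᶜ) * Cε' := by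
      rw [Fin.prod_univ_succ]
    rw [hsplit]
    by_cases hε0 : ε 0 = true
    · simp only [hε0, if_true]
      have hindmul : ∀ w : Euc D, S.indicator (fun _ => (1:ℝ≥0∞)) w *
          (Cε' * ENNReal.ofReal (Real.cosh (l * ‖x + (w - c)‖))) =
          S.indicator (fun w => Cε' * ENNReal.ofReal (Real.cosh (l * ‖x + (w - c)‖))) w := by
        intro w
        by_cases hw : w ∈ S <;> simp [hw]
      rw [lintegral_congr hindmul, lintegral_indicator hS _]
      have hmeas2 : Measurable fun w : Euc D =>
          ENNReal.ofReal (Real.cosh (l * ‖x + (w - c)‖)) := by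
        exact (ENNReal.continuous_ofReal.comp (Real.continuous_cosh.comp
          (continuous_const.mul (Continuous.norm
            (continuous_const.add (continuous_id.sub continuous_const)))))).measurable
      rw [lintegral_const_mul _ hmeas2]
      calc Cε' * ∫⁻ w in S, ENNReal.ofReal (Real.cosh (l * ‖x + (w - c)‖)) ∂ρ
          ≤ Cε' * ENNReal.ofReal ((ρ S).toReal * (Real.exp (l^2/2) * Real.cosh (l * ‖x‖))) :=
            mul_le_mul_right (stepA ρ hS c hbound hmean hl x) _
        _ = ENNReal.ofReal ((ρ S).toReal * Real.exp (l^2/2)) * Cε' *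
              ENNReal.ofReal (Real.cosh (l * ‖x‖)) := by
            rw [show ((ρ S).toReal * (Real.exp (l^2/2) * Real.cosh (l * ‖x‖)))
                = ((ρ S).toReal * Real.exp (l^2/2)) * Real.cosh (l * ‖x‖) by ring]
            rw [ENNReal.ofReal_mul (by positivity)]
            ring
    · have hε0' : ε 0 = false := by
        cases h : ε 0
        · rfl
        · exact absurd h hε0
      simp only [hε0', if_false, Bool.false_eq_true, sub_zero, add_zero]
      have hindmul : ∀ w : Euc D, Sᶜ.indicator (fun _ => (1:ℝ≥0∞)) w *
          (Cε' * ENNReal.ofReal (Real.cosh (l * ‖x‖))) =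
          Sᶜ.indicator (fun _ => Cε' * ENNReal.ofReal (Real.cosh (l * ‖x‖))) w := by
        intro w
        by_cases hw : w ∈ Sᶜ <;> simp [hw]
      rw [lintegral_congr hindmul, lintegral_indicator hS.compl _, setLIntegral_const]
      ring_nf
      exact le_refl _

lemma ofReal_prod_of_nonneg' {ι : Type*} (s : Finset ι) (f : ι → ℝ) (hf : ∀ i ∈ s, 0 ≤ f i) :
    ENNReal.ofReal (∏ i ∈ s, f i) = ∏ i ∈ s, ENNReal.ofReal (f i) := by
  induction s using Finset.cons_induction with
  | empty => simp
  | cons a s ha ih =>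
    rw [Finset.prod_cons, Finset.prod_cons,
      ENNReal.ofReal_mul (hf a (Finset.mem_cons_self a s)),
      ih (fun i hi => hf i (Finset.mem_cons_of_mem hi))]

lemma joint_law {D : ℕ} {Ω : Type} [MeasurableSpace Ω] (P : Measure Ω) [IsProbabilityMeasure P]
    (ρ : Measure (Euc D)) [IsProbabilityMeasure ρ]
    {n : ℕ} (Xs : Fin n → Ω → Euc D) (hXmeas : ∀ i, Measurable (Xs i))
    (hindep : iIndepFun Xs P)
    (hlaw : ∀ i, Measure.map (Xs i) P = ρ) :
    Measure.map (fun ω (i : Fin n) => Xs i ω) P = Measure.pi (fun _ => ρ) := by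
  refine (Measure.pi_eq fun s hs => ?_).symm
  rw [Measure.map_apply (measurable_pi_lambda _ hXmeas) (MeasurableSet.univ_pi hs)]
  have hpre : (fun ω (i : Fin n) => Xs i ω) ⁻¹' (Set.pi Set.univ s) =
      ⋂ i ∈ Finset.univ, Xs i ⁻¹' (s i) := by
    ext ω; simp [Set.mem_pi]
  rw [hpre, (iIndepFun_iff_measure_inter_preimage_eq_mul.1 hindep) Finset.univ (fun i _ => hs i)]
  refine Finset.prod_congr rfl fun i _ => ?_
  rw [← hlaw i, Measure.map_apply (hXmeas i) (hs i)]


lemma exp_half_le_cosh (y : ℝ) : Real.exp y / 2 ≤ Real.cosh y := by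
  rw [Real.cosh_eq]
  have := (Real.exp_pos (-y)).le
  linarith

end AuxHoeffding

set_option maxHeartbeats 2000000

theorem stmt_10 {D : ℕ} {X : Set (Euc D)} {a : ℕ} (ha : 1 ≤ a) (T : PartitionTree D X a)
    (hX0 : (0 : Euc D) ∈ X) (hXb : Bornology.IsBounded X) (hXd : Metric.diam X ≤ 1)
    (ρ : Measure (Euc D)) [IsProbabilityMeasure ρ] (hρX : ρ Xᶜ = 0)
    (xstar : T.Cell → Euc D) (hxstar : ∀ I, xstar I ∈ X)
    {Ω : Type} [MeasurableSpace Ω] (P : Measure Ω) [IsProbabilityMeasure P]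
    {n : ℕ} (Xs : Fin n → Ω → Euc D) (hXmeas : ∀ i, Measurable (Xs i))
    (hindep : iIndepFun Xs P)
    (hlaw : ∀ i, Measure.map (Xs i) P = ρ)
    (xhat : T.Cell → Euc D) (hxhat : ∀ I, xhat I ∈ X)
    (I : T.Cell) (hI : ρ (T.cset I) ≠ 0) (t : ℝ) (ht : 0 < t) :
    P {ω | t < ‖T.empCenter xhat (fun i => Xs i ω) I - T.center ρ xstar I‖} ≤
      ENNReal.ofReal (2 * Real.exp (-((n : ℝ) * (ρ (T.cset I)).toReal * t ^ 2) / 8)) := by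
  set S := T.cset I with hSdef
  set c := T.center ρ xstar I with hcdef
  have hS : MeasurableSet S := T.cset_measurable I
  set p : ℝ := (ρ S).toReal with hp
  have hSfin : ρ S ≠ ⊤ := measure_ne_top ρ S
  have hppos : 0 < p := ENNReal.toReal_pos hI hSfin
  have hp1 : p ≤ 1 := by
    rw [hp]
    exact ENNReal.toReal_le_of_le_ofReal one_pos.le (by simpa using prob_le_one)
  have hSX : S ⊆ X := by
    have hc := T.level_cover (T.depth I)
    rw [← hc]
    exact Set.subset_biUnion_of_mem (u := fun J => T.cset J)
      (show I ∈ {J | T.depth J = T.depth I} from rfl)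
  have hXnorm : ∀ z ∈ X, ∀ y ∈ X, ‖z - y‖ ≤ 1 := fun z hz y hy => by
    rw [← dist_eq_norm]
    exact le_trans (Metric.dist_le_diam_of_mem hXb hz hy) hXd
  have hIntS : Integrable (fun w => w) (ρ.restrict S) := by
    refine ⟨continuous_id.aestronglyMeasurable, ?_⟩
    apply HasFiniteIntegral.of_bounded (C := 1)
    filter_upwards [ae_restrict_mem hS] with w hw
    simpa using hXnorm w (hSX hw) 0 hX0
  have hc_eq : c = p⁻¹ • ∫ w in S, w ∂ρ := by
    rw [hcdef, PartitionTree.center, if_pos hI]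
  have hmean : ∫ w in S, (w - c) ∂ρ = 0 := by
    rw [integral_sub hIntS (integrable_const c), setIntegral_const, hc_eq, measureReal_def, ← hp,
      smul_smul, mul_inv_cancel₀ (ne_of_gt hppos), one_smul, sub_self]
  have hzc : ∀ z ∈ X, ‖z - c‖ ≤ 1 := by
    intro z hz
    have h1 : z - c = p⁻¹ • ∫ w in S, (z - w) ∂ρ := by
      rw [integral_sub (integrable_const z) hIntS, setIntegral_const, measureReal_def, ← hp, smul_sub,
        smul_smul, inv_mul_cancel₀ (ne_of_gt hppos), one_smul, hc_eq]
    rw [h1, norm_smul]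
    have h2 : ‖∫ w in S, (z - w) ∂ρ‖ ≤ 1 * (ρ S).toReal := by
      apply norm_setIntegral_le_of_norm_le_const (lt_top_iff_ne_top.2 hSfin)
      intro w hw
      exact hXnorm z hz w (hSX hw)
    calc ‖p⁻¹‖ * ‖∫ w in S, (z - w) ∂ρ‖ ≤ ‖p⁻¹‖ * (1 * (ρ S).toReal) := by
          exact mul_le_mul_of_nonneg_left h2 (norm_nonneg _)
      _ = p⁻¹ * p := by rw [Real.norm_eq_abs, abs_of_nonneg (by positivity), one_mul, ← hp]
      _ = 1 := inv_mul_cancel₀ (ne_of_gt hppos)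
  have hbound : ∀ w ∈ S, ‖w - c‖ ≤ 1 := fun w hw => hzc w (hSX hw)
  -- sure bound on the empirical center
  have hEmpBound : ∀ v : Fin n → Euc D, ‖T.empCenter xhat v I - c‖ ≤ 1 := by
    intro v
    rw [PartitionTree.empCenter]
    by_cases hcnt : T.empCount v I ≠ 0
    · rw [if_pos hcnt]
      set A : Finset (Fin n) := Finset.univ.filter (fun i => v i ∈ S) with hA
      have hsetA : {i : Fin n | v i ∈ T.cset I} = ↑A := by
        ext i; simp [hA, hSdef]
      have hcard : T.empCount v I = A.card := by
        rw [PartitionTree.empCount, ← hSdef, hsetA, Set.ncard_coe_finset]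
      have hsum : ∑ᶠ i ∈ {i : Fin n | v i ∈ T.cset I}, v i = ∑ i ∈ A, v i := by
        rw [hsetA, finsum_mem_coe_finset]
      rw [hcard, hsum]
      have hAne : (A.card : ℝ) ≠ 0 := by
        rw [hcard] at hcnt
        exact_mod_cast hcnt
      have hrw : (A.card:ℝ)⁻¹ • (∑ i ∈ A, v i) - c = (A.card:ℝ)⁻¹ • ∑ i ∈ A, (v i - c) := by
        rw [Finset.sum_sub_distrib, smul_sub, Finset.sum_const, ← Nat.cast_smul_eq_nsmul ℝ,
          smul_smul, inv_mul_cancel₀ hAne, one_smul]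
      rw [hrw, norm_smul]
      have h3 : ‖∑ i ∈ A, (v i - c)‖ ≤ (A.card : ℝ) * 1 := by
        apply le_trans (norm_sum_le A _)
        apply le_trans (Finset.sum_le_card_nsmul A _ 1 ?_)
        · simp
        · intro i hi
          exact hbound (v i) (by simpa [hA] using hi)
      calc ‖(A.card:ℝ)⁻¹‖ * ‖∑ i ∈ A, (v i - c)‖ ≤ ‖(A.card:ℝ)⁻¹‖ * ((A.card:ℝ) * 1) :=
            mul_le_mul_of_nonneg_left h3 (norm_nonneg _)
        _ = 1 := by
            rw [Real.norm_eq_abs, abs_of_nonneg (by positivity), mul_one,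
              inv_mul_cancel₀ hAne]
    · rw [if_neg hcnt]
      exact hzc (xhat I) (hxhat I)
  rcases lt_or_ge (1:ℝ) t with ht1 | ht1
  · -- t > 1 : the event is empty
    have hempty : {ω | t < ‖T.empCenter xhat (fun i => Xs i ω) I - c‖} = ∅ := by
      ext ω
      simp only [Set.mem_setOf_eq, Set.mem_empty_iff_false, iff_false, not_lt]
      exact le_trans (hEmpBound _) ht1.le
    rw [hempty, measure_empty]
    positivity
  · -- main case : t ≤ 1
    have hmapmeas : Measurable (fun ω (i : Fin n) => Xs i ω) := measurable_pi_lambda _ hXmeas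
    have hjoint := joint_law P ρ Xs hXmeas hindep hlaw
    set E := {ω | t < ‖T.empCenter xhat (fun i => Xs i ω) I - c‖} with hE
    set Pat : (Fin n → Bool) → Set Ω :=
      fun ε => {ω | ∀ i, Xs i ω ∈ (if ε i then S else Sᶜ)} with hPat
    have hcover : E ⊆ ⋃ ε : Fin n → Bool, (E ∩ Pat ε) := by
      intro ω hω
      refine Set.mem_iUnion.2 ⟨fun i => decide (Xs i ω ∈ S), hω, fun i => ?_⟩
      by_cases h : Xs i ω ∈ S <;> simp [h]
    have hsub : P E ≤ ∑ ε : Fin n → Bool, P (E ∩ Pat ε) :=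
      calc P E ≤ P (⋃ ε : Fin n → Bool, (E ∩ Pat ε)) := measure_mono hcover
        _ ≤ ∑' ε : Fin n → Bool, P (E ∩ Pat ε) := measure_iUnion_le _
        _ = ∑ ε : Fin n → Bool, P (E ∩ Pat ε) := tsum_fintype _
    have hterm : ∀ ε : Fin n → Bool,
        P (E ∩ Pat ε) ≤ ENNReal.ofReal
          (2 * ((p * Real.exp (-(t^2)/2)) ^ ((Finset.univ.filter (fun i => ε i = true)).card) *
            (1-p) ^ (n - (Finset.univ.filter (fun i => ε i = true)).card))) := by
      intro ε
      set m : ℕ := (Finset.univ.filter (fun i => ε i = true)).card with hm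
      set H : (Fin n → Euc D) → ℝ≥0∞ := fun v =>
        (∏ i, (if ε i then S else Sᶜ).indicator (fun _ => (1:ℝ≥0∞)) (v i)) *
          ENNReal.ofReal (Real.cosh (t * ‖(0:Euc D) + ∑ i, (if ε i then v i - c else 0)‖)) with hH
      have hHmeas : Measurable H := measurable_stepB hS c t ε 0
      set K : ℝ≥0∞ := ENNReal.ofReal (Real.cosh (t * ((m:ℝ) * t))) with hK
      have hKc : 1 ≤ Real.cosh (t * ((m:ℝ)*t)) := Real.one_le_cosh _
      have hK0 : K ≠ 0 := by
        rw [hK, ne_eq, ENNReal.ofReal_eq_zero, not_le]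
        linarith
      have hKtop : K ≠ ⊤ := ENNReal.ofReal_ne_top
      have hsubG : E ∩ Pat ε ⊆ {ω | K ≤ H (fun i => Xs i ω)} := by
        rintro ω ⟨hωE, hωP⟩
        have hind1 : (∏ i, (if ε i then S else Sᶜ).indicator
            (fun _ => (1:ℝ≥0∞)) (Xs i ω)) = 1 := by
          apply Finset.prod_eq_one
          intro i _
          exact Set.indicator_of_mem (hωP i) _
        have hcosh : Real.cosh (t * ((m:ℝ)*t)) ≤
            Real.cosh (t * ‖(0:Euc D) + ∑ i, (if ε i then Xs i ω - c else 0)‖) := by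
          rw [Real.cosh_le_cosh, abs_of_nonneg (by positivity), abs_of_nonneg (by positivity)]
          apply mul_le_mul_of_nonneg_left _ ht.le
          rcases Nat.eq_zero_or_pos m with hm0 | hmpos
          · rw [hm0]
            simp only [Nat.cast_zero, zero_mul]
            exact norm_nonneg _
          · set v : Fin n → Euc D := fun i => Xs i ω with hv
            set A : Finset (Fin n) := Finset.univ.filter (fun i => ε i = true) with hA
            have hsetA : {i : Fin n | v i ∈ T.cset I} = ↑A := by
              ext i
              simp only [Set.mem_setOf_eq, hA, Finset.coe_filter, Finset.mem_univ, true_and]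
              constructor
              · intro hmem
                by_contra hne
                have hεi : ε i = false := by
                  cases h : ε i
                  · rfl
                  · exact absurd h hne
                have h2 := hωP i
                rw [hεi] at h2
                simp only [Bool.false_eq_true, if_false] at h2
                exact h2 hmem
              · intro hmem
                have h2 := hωP i
                rw [hmem] at h2
                simpa using h2
            have hcount : T.empCount v I = m := by
              rw [PartitionTree.empCount, hsetA, Set.ncard_coe_finset, hm, hA]
            have hcne : T.empCount v I ≠ 0 := by
              rw [hcount]
              omega
            have hmne : ((m:ℝ)) ≠ 0 := Nat.cast_ne_zero.2 (by omega)
            have hcenter : T.empCenter xhat v I = ((m:ℝ))⁻¹ • ∑ i ∈ A, v i := by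
              rw [PartitionTree.empCenter, if_pos hcne, hcount, hsetA, finsum_mem_coe_finset]
            have hrw : ((m:ℝ))⁻¹ • (∑ i ∈ A, v i) - c = ((m:ℝ))⁻¹ • ∑ i ∈ A, (v i - c) := by
              have hAcard : A.card = m := by rw [hm, hA]
              rw [Finset.sum_sub_distrib, smul_sub, Finset.sum_const, hAcard,
                ← Nat.cast_smul_eq_nsmul ℝ, smul_smul, inv_mul_cancel₀ hmne, one_smul]
            have hevent : t < ‖T.empCenter xhat v I - c‖ := hωE
            rw [hcenter, hrw, norm_smul, Real.norm_eq_abs, abs_of_nonneg (by positivity)]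
              at hevent
            have hsum_eq : ∑ i ∈ A, (v i - c) = ∑ i, (if ε i then v i - c else 0) := by
              rw [hA, ← Finset.sum_filter]
            rw [zero_add, ← hsum_eq]
            calc (m:ℝ) * t ≤ (m:ℝ) * ((m:ℝ)⁻¹ * ‖∑ i ∈ A, (v i - c)‖) :=
                  mul_le_mul_of_nonneg_left hevent.le (by positivity)
              _ = ‖∑ i ∈ A, (v i - c)‖ := by
                  field_simp
        show K ≤ H (fun i => Xs i ω)
        rw [hH]
        simp only []
        rw [hind1, one_mul, hK]
        exact ENNReal.ofReal_le_ofReal hcosh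
      have hmarkov : P (E ∩ Pat ε) ≤ (∫⁻ v, H v ∂(Measure.pi fun _ : Fin n => ρ)) / K := by
        have h1 : P (E ∩ Pat ε) ≤ P {ω | K ≤ H (fun i => Xs i ω)} := measure_mono hsubG
        have h2 := mul_meas_ge_le_lintegral₀
          (μ := P) ((hHmeas.comp hmapmeas).aemeasurable) K
        have h3 : ∫⁻ ω, H (fun i => Xs i ω) ∂P = ∫⁻ v, H v ∂(Measure.pi fun _ : Fin n => ρ) := by
          rw [← hjoint, lintegral_map hHmeas hmapmeas]
        rw [← h3]
        refine le_trans h1 ?_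
        rw [ENNReal.le_div_iff_mul_le (Or.inl hK0) (Or.inl hKtop), mul_comm]
        exact h2
      have hstep := stepB ρ hS c hbound hmean ht.le n ε 0
      have hcompl : ρ Sᶜ = ENNReal.ofReal (1-p) := by
        rw [measure_compl hS hSfin, measure_univ,
          show ρ S = ENNReal.ofReal p from (ENNReal.ofReal_toReal hSfin).symm,
          ← ENNReal.ofReal_one, ← ENNReal.ofReal_sub _ hppos.le]
      have hcards : (Finset.univ.filter (fun i => ¬ (ε i = true))).card = n - m := by
        have h := Finset.card_filter_add_card_filter_not
          (s := Finset.univ) (p := fun i : Fin n => ε i = true)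
        rw [Finset.card_univ, Fintype.card_fin] at h
        omega
      have hconst : (∏ i, if ε i then ENNReal.ofReal ((ρ S).toReal * Real.exp (t^2/2))
            else ρ Sᶜ) * ENNReal.ofReal (Real.cosh (t*‖(0:Euc D)‖)) =
          ENNReal.ofReal ((p * Real.exp (t^2/2))^m * (1-p)^(n-m)) := by
        rw [norm_zero, mul_zero, Real.cosh_zero, ENNReal.ofReal_one, mul_one]
        calc ∏ i, (if ε i then ENNReal.ofReal ((ρ S).toReal * Real.exp (t^2/2)) else ρ Sᶜ)
            = ∏ i, ENNReal.ofReal (if ε i then p * Real.exp (t^2/2) else 1-p) := by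
              refine Finset.prod_congr rfl fun i _ => ?_
              by_cases h : ε i = true <;> simp [h, hcompl, ← hp]
          _ = ENNReal.ofReal (∏ i, if ε i then p * Real.exp (t^2/2) else 1-p) := by
              rw [ofReal_prod_of_nonneg']
              intro i _
              by_cases h : ε i = true
              · rw [if_pos h]; positivity
              · rw [if_neg h]; linarith
          _ = ENNReal.ofReal ((p * Real.exp (t^2/2))^m * (1-p)^(n-m)) := by
              congr 1
              rw [Finset.prod_ite, Finset.prod_const, Finset.prod_const, hcards, hm]
      calc P (E ∩ Pat ε) ≤ (∫⁻ v, H v ∂(Measure.pi fun _ : Fin n => ρ)) / K := hmarkov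
        _ ≤ ENNReal.ofReal ((p * Real.exp (t^2/2))^m * (1-p)^(n-m)) / K := by
            gcongr
            exact le_trans hstep (le_of_eq hconst)
        _ = ENNReal.ofReal (((p * Real.exp (t^2/2))^m * (1-p)^(n-m)) /
              Real.cosh (t * ((m:ℝ)*t))) := by
            rw [ENNReal.ofReal_div_of_pos (Real.cosh_pos _), hK]
        _ ≤ ENNReal.ofReal (2 * ((p * Real.exp (-(t^2)/2))^m * (1-p)^(n-m))) := by
            apply ENNReal.ofReal_le_ofReal
            have hch : Real.exp ((m:ℝ) * t^2) / 2 ≤ Real.cosh (t * ((m:ℝ)*t)) := by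
              rw [show t * ((m:ℝ)*t) = (m:ℝ)*t^2 by ring]
              exact exp_half_le_cosh _
            have hcpos : (0:ℝ) < Real.cosh (t * ((m:ℝ)*t)) := Real.cosh_pos _
            have hepos : (0:ℝ) < Real.exp ((m:ℝ) * t^2) / 2 := by positivity
            have hQ : (0:ℝ) ≤ (p * Real.exp (t^2/2))^m * (1-p)^(n-m) := by
              apply mul_nonneg (pow_nonneg (by positivity) m)
                (pow_nonneg (by linarith) (n-m))
            calc (p * Real.exp (t^2/2))^m * (1-p)^(n-m) / Real.cosh (t * ((m:ℝ)*t))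
                ≤ (p * Real.exp (t^2/2))^m * (1-p)^(n-m) / (Real.exp ((m:ℝ) * t^2) / 2) :=
                  div_le_div_of_nonneg_left hQ hepos hch
              _ = 2 * (((p * Real.exp (t^2/2))^m * Real.exp (-((m:ℝ) * t^2))) * (1-p)^(n-m)) := by
                  rw [Real.exp_neg]
                  field_simp
              _ = 2 * ((p * Real.exp (-(t^2)/2))^m * (1-p)^(n-m)) := by
                  have he1 : Real.exp (-((m:ℝ) * t^2)) = (Real.exp (-(t^2)))^m := by
                    rw [← Real.exp_nat_mul]
                    ring_nf
                  have he2 : (p * Real.exp (t^2/2))^m * (Real.exp (-(t^2)))^m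
                      = (p * Real.exp (-(t^2)/2))^m := by
                    rw [← mul_pow, mul_assoc, ← Real.exp_add,
                      show t^2/2 + -(t^2) = -(t^2)/2 by ring]
                  rw [he1, ← he2]
    refine le_trans hsub ?_
    have hA0 : (0:ℝ) ≤ p * Real.exp (-(t^2)/2) := by positivity
    have hB0 : (0:ℝ) ≤ 1 - p := by linarith
    have hsum2 : ∑ ε : Fin n → Bool, P (E ∩ Pat ε) ≤
        ∑ ε : Fin n → Bool, ENNReal.ofReal
          (2 * ((p * Real.exp (-(t^2)/2)) ^ ((Finset.univ.filter (fun i => ε i = true)).card) *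
            (1-p) ^ (n - (Finset.univ.filter (fun i => ε i = true)).card))) :=
      Finset.sum_le_sum (fun ε _ => hterm ε)
    refine le_trans hsum2 ?_
    rw [← ENNReal.ofReal_sum_of_nonneg (fun ε _ => by positivity)]
    apply ENNReal.ofReal_le_ofReal
    have hprod_eq : ∀ ε : Fin n → Bool,
        (p * Real.exp (-(t^2)/2)) ^ ((Finset.univ.filter (fun i => ε i = true)).card) *
          (1-p) ^ (n - (Finset.univ.filter (fun i => ε i = true)).card) =
        ∏ i, (if ε i then p * Real.exp (-(t^2)/2) else 1-p) := by
      intro ε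
      rw [Finset.prod_ite, Finset.prod_const, Finset.prod_const]
      congr 2
      have h := Finset.card_filter_add_card_filter_not
        (s := Finset.univ) (p := fun i : Fin n => ε i = true)
      rw [Finset.card_univ, Fintype.card_fin] at h
      omega
    calc ∑ ε : Fin n → Bool,
          2 * ((p * Real.exp (-(t^2)/2)) ^ ((Finset.univ.filter (fun i => ε i = true)).card) *
            (1-p) ^ (n - (Finset.univ.filter (fun i => ε i = true)).card))
        = 2 * ∑ ε : Fin n → Bool, ∏ i, (if ε i then p * Real.exp (-(t^2)/2) else 1-p) := by
          rw [Finset.mul_sum]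
          exact Finset.sum_congr rfl fun ε _ => by rw [hprod_eq ε]
      _ = 2 * (p * Real.exp (-(t^2)/2) + (1-p))^n := by
          congr 1
          rw [show p * Real.exp (-(t^2)/2) + (1-p)
              = ∑ b : Bool, (if b then p * Real.exp (-(t^2)/2) else 1-p) by simp]
          rw [Fintype.sum_pow (fun b : Bool => if b then p * Real.exp (-(t^2)/2) else 1-p) n]
      _ ≤ 2 * Real.exp (-((n:ℝ) * p * t^2)/8) := by
          have hbase : (0:ℝ) ≤ p * Real.exp (-(t^2)/2) + (1-p) := by linarith
          have h1 : p * Real.exp (-(t^2)/2) + (1-p) ≤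
              Real.exp (-(p * (1 - Real.exp (-(t^2)/2)))) := by
            have h2 := Real.add_one_le_exp (-(p * (1 - Real.exp (-(t^2)/2))))
            linarith
          have hx : Real.exp (-(t^2)/2) ≤ 1 - t^2/4 := by
            have h3 := exp_neg_le_one_sub_half (x := t^2/2) (by positivity) (by nlinarith)
            rw [show -(t^2/2) = -(t^2)/2 by ring] at h3
            linarith
          have hnp : (0:ℝ) ≤ (n:ℝ) * p := by positivity
          calc (2:ℝ) * (p * Real.exp (-(t^2)/2) + (1-p))^n
              ≤ 2 * (Real.exp (-(p * (1 - Real.exp (-(t^2)/2)))))^n := by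
                apply mul_le_mul_of_nonneg_left _ (by norm_num)
                exact pow_le_pow_left₀ hbase h1 n
            _ = 2 * Real.exp ((n:ℝ) * (-(p * (1 - Real.exp (-(t^2)/2))))) := by
                rw [Real.exp_nat_mul]
            _ ≤ 2 * Real.exp (-((n:ℝ) * p * t^2)/8) := by
                apply mul_le_mul_of_nonneg_left _ (by norm_num)
                apply Real.exp_le_exp.2
                have h4 : t^2/8 ≤ 1 - Real.exp (-(t^2)/2) := by nlinarith [sq_nonneg t]
                nlinarith [mul_le_mul_of_nonneg_left h4 hnp]

end
end

section
/- Let I be a cell with ρ_I > 0. Then for every t > 0, P( |√(n_I/n) − √ρ_I| ≥ t ) ≤ 2 exp( −n t² / 2 ). -/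
open MeasureTheory Set ProbabilityTheory
open scoped BigOperators ENNReal NNReal

attribute [local instance] Classical.propDecidable

noncomputable section

lemma key_ineq {a p : ℝ} (ha : 0 < a) (hp : 0 < p) :
    (Real.sqrt a - Real.sqrt p)^2 ≤ a * Real.log (a/p) - a + p := by
  have hsa : (0:ℝ) < Real.sqrt a := Real.sqrt_pos.mpr ha
  have hsp' : (0:ℝ) < Real.sqrt p := Real.sqrt_pos.mpr hp
  have hr : (0:ℝ) < Real.sqrt p / Real.sqrt a := div_pos hsp' hsa
  have h1 := Real.log_le_sub_one_of_pos hr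
  have hlog : Real.log (a/p) = -2 * Real.log (Real.sqrt p / Real.sqrt a) := by
    rw [Real.log_div hsp'.ne' hsa.ne', Real.log_sqrt hp.le, Real.log_sqrt ha.le,
      Real.log_div ha.ne' hp.ne']
    ring
  have hsq : Real.sqrt a * Real.sqrt a = a := Real.mul_self_sqrt ha.le
  have hsp : Real.sqrt p * Real.sqrt p = p := Real.mul_self_sqrt hp.le
  have key : a * (Real.sqrt p / Real.sqrt a) = Real.sqrt a * Real.sqrt p := by
    rw [div_eq_inv_mul, ← mul_assoc]
    rw [show a * (Real.sqrt a)⁻¹ = Real.sqrt a by field_simp [hsa.ne']; rw [Real.sq_sqrt ha.le]]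
  nlinarith [mul_le_mul_of_nonneg_left h1 ha.le, hsq, hsp]

theorem stmt_12 {D : ℕ} (I : Set (Euc D)) (hI : MeasurableSet I)
    (ρ : Measure (Euc D)) [IsProbabilityMeasure ρ] (hρI : ρ I ≠ 0)
    {Ω : Type} [MeasurableSpace Ω] (P : Measure Ω) [IsProbabilityMeasure P]
    {n : ℕ} (Xs : Fin n → Ω → Euc D) (hXmeas : ∀ i, Measurable (Xs i))
    (hindep : iIndepFun Xs P)
    (hlaw : ∀ i, Measure.map (Xs i) P = ρ)
    (t : ℝ) (ht : 0 < t) :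
    P {ω | t ≤ |Real.sqrt (({i | Xs i ω ∈ I}.ncard : ℝ) / (n : ℝ)) -
        Real.sqrt ((ρ I).toReal)|} ≤
      ENNReal.ofReal (2 * Real.exp (-((n : ℝ) * t ^ 2) / 2)) := by

  rcases Nat.eq_zero_or_pos n with hn | hn
  · subst hn
    refine le_trans (measure_mono (Set.subset_univ _)) ?_
    rw [measure_univ, ENNReal.one_le_ofReal]
    simp only [Nat.cast_zero, zero_mul, neg_zero, zero_div, Real.exp_zero, mul_one]
    exact one_le_two
  have hnR : (0:ℝ) < n := Nat.cast_pos.mpr hn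
  set p : ℝ := (ρ I).toReal with hpdef
  have hp0 : 0 < p := ENNReal.toReal_pos hρI (measure_ne_top ρ I)
  have hp1 : p ≤ 1 := by
    rw [hpdef]
    exact ENNReal.toReal_le_of_le_ofReal one_pos.le (by simpa using prob_le_one (μ := ρ) (s := I))
  set Y : Fin n → Ω → ℝ := fun i ω => I.indicator (fun _ => (1:ℝ)) (Xs i ω) with hY
  set S : Ω → ℝ := ∑ i, Y i with hSdef
  have hYmeas : ∀ i, Measurable (Y i) :=
    fun i => (measurable_const.indicator hI).comp (hXmeas i)
  have hYindep : iIndepFun Y P :=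
    hindep.comp (fun _ => I.indicator (fun _ => (1:ℝ))) (fun _ => measurable_const.indicator hI)
  -- counting
  have hcount : ∀ ω, ({i | Xs i ω ∈ I}.ncard : ℝ) = S ω := by
    intro ω
    have h1 : {i | Xs i ω ∈ I}.ncard = (Finset.univ.filter (fun i => Xs i ω ∈ I)).card := by
      rw [Set.ncard_eq_toFinset_card']
      congr 1
      ext i
      simp
    rw [h1, hSdef, Finset.sum_apply, Finset.card_filter]
    push_cast
    refine Finset.sum_congr rfl (fun i _ => ?_)
    by_cases hx : Xs i ω ∈ I <;> simp [hY, hx]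
  have hS0 : ∀ ω, 0 ≤ S ω := by
    intro ω
    rw [← hcount ω]; positivity
  -- Chernoff machinery
  have hmgf1 : ∀ (lam : ℝ) (i : Fin n), mgf (Y i) P lam = 1 + p * (Real.exp lam - 1) := by
    intro lam i
    have h2 : mgf (Y i) P lam
        = ∫ x, Real.exp (lam * I.indicator (fun _ => (1:ℝ)) x) ∂ρ := by
      rw [mgf, ← hlaw i, integral_map (hXmeas i).aemeasurable]
      exact (((measurable_const.indicator hI).const_mul lam).exp).aestronglyMeasurable
    rw [h2]
    have hexp : ∀ (x : Euc D), Real.exp (lam * I.indicator (fun _ => (1:ℝ)) x)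
        = I.indicator (fun _ => Real.exp lam - 1) x + 1 := by
      intro x
      by_cases hx : x ∈ I <;> simp [hx]
    simp_rw [hexp]
    rw [integral_add ((integrable_const (Real.exp lam - 1)).indicator hI)
      (integrable_const 1), integral_indicator_const _ hI, integral_const]
    simp [hpdef]
    change (ρ I).toReal * (Real.exp lam - 1) + 1 = _
    ring
  have hint1 : ∀ (lam : ℝ) (i : Fin n), Integrable (fun ω => Real.exp (lam * Y i ω)) P := by
    intro lam i
    refine Integrable.mono' (integrable_const (max (Real.exp lam) 1))
      (((hYmeas i).const_mul lam).exp).aestronglyMeasurable ?_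
    filter_upwards with ω
    rw [Real.norm_eq_abs, abs_of_pos (Real.exp_pos _)]
    by_cases hx : Xs i ω ∈ I <;> simp [hY, hx, le_max_left, le_max_right]
  have hmgfS : ∀ lam : ℝ, mgf S P lam = (1 + p * (Real.exp lam - 1))^n := by
    intro lam
    rw [hSdef, hYindep.mgf_sum hYmeas]
    simp [hmgf1 lam]
  have hintS : ∀ lam : ℝ, Integrable (fun ω => Real.exp (lam * S ω)) P := fun lam =>
    hYindep.integrable_exp_mul_sum hYmeas (fun i _ => hint1 lam i)
  -- the common mgf bound
  have hbound : ∀ lam ε : ℝ, Real.exp (-lam * ε) * mgf S P lam ≤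
      Real.exp (-lam * ε + n * (p * (Real.exp lam - 1))) := by
    intro lam ε
    rw [hmgfS lam, Real.exp_add]
    refine mul_le_mul_of_nonneg_left ?_ (Real.exp_pos _).le
    have hxe : 1 + p * (Real.exp lam - 1) ≤ Real.exp (p * (Real.exp lam - 1)) := by
      linarith [Real.add_one_le_exp (p * (Real.exp lam - 1))]
    have hbase : 0 ≤ 1 + p * (Real.exp lam - 1) := by
      nlinarith [Real.exp_pos lam]
    calc (1 + p * (Real.exp lam - 1))^n ≤ (Real.exp (p * (Real.exp lam - 1)))^n :=
          pow_le_pow_left₀ hbase hxe n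
      _ = Real.exp (n * (p * (Real.exp lam - 1))) := by
          rw [← Real.exp_nat_mul]
  have hchup : ∀ lam ε : ℝ, 0 ≤ lam → P {ω | ε ≤ S ω} ≤
      ENNReal.ofReal (Real.exp (-lam * ε + n * (p * (Real.exp lam - 1)))) := by
    intro lam ε hlam
    have h1 := (measure_ge_le_exp_mul_mgf (μ := P) (X := S) ε hlam (hintS lam)).trans
      (hbound lam ε)
    rw [← ENNReal.ofReal_toReal (measure_ne_top P {ω | ε ≤ S ω})]
    exact ENNReal.ofReal_le_ofReal h1
  have hchlo : ∀ lam ε : ℝ, lam ≤ 0 → P {ω | S ω ≤ ε} ≤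
      ENNReal.ofReal (Real.exp (-lam * ε + n * (p * (Real.exp lam - 1)))) := by
    intro lam ε hlam
    have h1 := (measure_le_le_exp_mul_mgf (μ := P) (X := S) ε hlam (hintS lam)).trans
      (hbound lam ε)
    rw [← ENNReal.ofReal_toReal (measure_ne_top P {ω | S ω ≤ ε})]
    exact ENNReal.ofReal_le_ofReal h1
  -- event decomposition
  set U : Set Ω := {ω | (n:ℝ) * (Real.sqrt p + t)^2 ≤ S ω} with hU
  set L : Set Ω := {ω | Real.sqrt (S ω / n) ≤ Real.sqrt p - t} with hL
  have hsub : {ω | t ≤ |Real.sqrt (({i | Xs i ω ∈ I}.ncard : ℝ) / (n : ℝ)) -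
      Real.sqrt p|} ⊆ U ∪ L := by
    intro ω hω
    simp only [Set.mem_setOf_eq, le_abs] at hω
    rw [hcount ω] at hω
    rcases hω with h | h
    · left
      have hq : 0 ≤ S ω / n := div_nonneg (hS0 ω) hnR.le
      have h2 : Real.sqrt p + t ≤ Real.sqrt (S ω / n) := by linarith
      have h3 : (Real.sqrt p + t)^2 ≤ (Real.sqrt (S ω / n))^2 :=
        pow_le_pow_left₀ (by positivity) h2 2
      rw [Real.sq_sqrt hq] at h3
      exact (le_div_iff₀' hnR).mp h3
    · right
      rw [hL, Set.mem_setOf_eq]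
      linarith
  -- upper tail bound
  have hupper : P U ≤ ENNReal.ofReal (Real.exp (-((n:ℝ) * t^2))) := by
    set a : ℝ := (Real.sqrt p + t)^2 with ha
    have ha0 : 0 < a := by positivity
    have hsa : Real.sqrt a = Real.sqrt p + t := Real.sqrt_sq (by positivity)
    have hap : p < a := by
      have := Real.sq_sqrt hp0.le
      nlinarith [Real.sqrt_nonneg p]
    set lam : ℝ := Real.log (a / p) with hlam
    have hlam0 : 0 ≤ lam := Real.log_nonneg ((one_le_div hp0).mpr hap.le)
    have helam : Real.exp lam = a / p := Real.exp_log (div_pos ha0 hp0)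
    refine (hchup lam ((n:ℝ) * a) hlam0).trans (ENNReal.ofReal_le_ofReal ?_)
    rw [Real.exp_le_exp, helam]
    have hpe : p * (a / p - 1) = a - p := by field_simp
    rw [hpe]
    have hkey := key_ineq ha0 hp0
    rw [hsa] at hkey
    have ht2 : (Real.sqrt p + t - Real.sqrt p)^2 = t^2 := by ring
    rw [ht2] at hkey
    nlinarith [hnR]
  -- lower tail bound
  have hlower : P L ≤ ENNReal.ofReal (Real.exp (-((n:ℝ) * t^2) / 2)) := by
    rcases lt_trichotomy t (Real.sqrt p) with hcase | hcase | hcase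
    · -- t < sqrt p
      set a : ℝ := (Real.sqrt p - t)^2 with ha
      have ha0 : 0 < a := by nlinarith
      have hsa : Real.sqrt a = Real.sqrt p - t := Real.sqrt_sq (by linarith)
      have hap : a ≤ p := by
        have := Real.sq_sqrt hp0.le
        nlinarith [Real.sqrt_nonneg p]
      set lam : ℝ := Real.log (a / p) with hlam
      have hlam0 : lam ≤ 0 := Real.log_nonpos (by positivity) ((div_le_one hp0).mpr hap)
      have helam : Real.exp lam = a / p := Real.exp_log (div_pos ha0 hp0)
      have hLsub : L ⊆ {ω | S ω ≤ (n:ℝ) * a} := by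
        intro ω hω
        rw [hL, Set.mem_setOf_eq] at hω
        have hq : 0 ≤ S ω / n := div_nonneg (hS0 ω) hnR.le
        have h3 : (Real.sqrt (S ω / n))^2 ≤ (Real.sqrt p - t)^2 :=
          pow_le_pow_left₀ (Real.sqrt_nonneg _) hω 2
        rw [Real.sq_sqrt hq] at h3
        exact (div_le_iff₀' hnR).mp h3
      refine (measure_mono hLsub).trans ((hchlo lam ((n:ℝ) * a) hlam0).trans
        (ENNReal.ofReal_le_ofReal ?_))
      rw [Real.exp_le_exp, helam]
      have hpe : p * (a / p - 1) = a - p := by field_simp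
      rw [hpe]
      have hkey := key_ineq ha0 hp0
      rw [hsa] at hkey
      have ht2 : (Real.sqrt p - t - Real.sqrt p)^2 = t^2 := by ring
      rw [ht2] at hkey
      nlinarith [hnR, sq_nonneg t]
    · -- t = sqrt p
      have htp : t^2 = p := by rw [hcase, Real.sq_sqrt hp0.le]
      set lam : ℝ := -Real.log 2 with hlam
      have hlam0 : lam ≤ 0 := neg_nonpos.mpr (Real.log_nonneg one_le_two)
      have helam : Real.exp lam = 1/2 := by
        rw [hlam, Real.exp_neg, Real.exp_log two_pos]
        norm_num
      have hLsub : L ⊆ {ω | S ω ≤ (0:ℝ)} := by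
        intro ω hω
        rw [hL, Set.mem_setOf_eq, hcase] at hω
        have h3 : Real.sqrt (S ω / n) = 0 :=
          le_antisymm (by linarith) (Real.sqrt_nonneg _)
        have hq : 0 ≤ S ω / n := div_nonneg (hS0 ω) hnR.le
        have := Real.sqrt_eq_zero hq |>.mp h3
        have : S ω = 0 := by
          field_simp at this
          simpa using this
        simp [this]
      refine (measure_mono hLsub).trans ((hchlo lam 0 hlam0).trans
        (ENNReal.ofReal_le_ofReal ?_))
      rw [Real.exp_le_exp, helam]
      rw [htp]
      ring_nf
      nlinarith [hnR]
    · -- t > sqrt p : L is empty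
      have hLe : L = ∅ := by
        ext ω
        simp only [hL, Set.mem_setOf_eq, Set.mem_empty_iff_false, iff_false, not_le]
        have := Real.sqrt_nonneg (S ω / n)
        linarith
      rw [hLe]
      simp
  -- combine
  calc P {ω | t ≤ |Real.sqrt (({i | Xs i ω ∈ I}.ncard : ℝ) / (n : ℝ)) - Real.sqrt p|}
      ≤ P (U ∪ L) := measure_mono hsub
    _ ≤ P U + P L := measure_union_le U L
    _ ≤ ENNReal.ofReal (Real.exp (-((n:ℝ) * t^2)))
        + ENNReal.ofReal (Real.exp (-((n:ℝ) * t^2) / 2)) := add_le_add hupper hlower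
    _ ≤ ENNReal.ofReal (2 * Real.exp (-((n : ℝ) * t ^ 2) / 2)) := by
        rw [← ENNReal.ofReal_add (Real.exp_pos _).le (Real.exp_pos _).le]
        refine ENNReal.ofReal_le_ofReal ?_
        have h1 : Real.exp (-((n:ℝ) * t^2)) ≤ Real.exp (-((n:ℝ) * t^2) / 2) := by
          rw [Real.exp_le_exp]
          nlinarith [hnR, sq_nonneg t]
        linarith


end
end

section
/- Let ξ_1, …, ξ_n be independent zero-mean random variables taking values in a real separable Hilbert space H, with ‖ξ_i‖ ≤ M almost surely for all i, for some constant M > 0. Then for every t > 0, P( ‖(1/n) Σ_{i=1}^n ξ_i‖ ≥ t ) ≤ 2 exp( −n t² / (4M²) ). -/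
open MeasureTheory Set ProbabilityTheory
open scoped BigOperators ENNReal NNReal

attribute [local instance] Classical.propDecidable

noncomputable section

/-- `sinh x ≤ x * cosh x` for `0 ≤ x`. -/
lemma aux_sinh_le_mul_cosh {x : ℝ} (hx : 0 ≤ x) : Real.sinh x ≤ x * Real.cosh x := by
  have hmono : MonotoneOn (fun y : ℝ => y * Real.cosh y - Real.sinh y) (Set.Ici 0) := by
    have hd : ∀ y : ℝ, HasDerivAt (fun y : ℝ => y * Real.cosh y - Real.sinh y)
        (y * Real.sinh y) y := by
      intro y
      have h1 := ((hasDerivAt_id y).mul (Real.hasDerivAt_cosh y)).sub (Real.hasDerivAt_sinh y)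
      simp [id_eq] at h1
      exact h1
    refine monotoneOn_of_deriv_nonneg (convex_Ici 0) ?_ ?_ ?_
    · exact (Continuous.sub (continuous_id.mul Real.continuous_cosh)
        Real.continuous_sinh).continuousOn
    · intro y _
      exact ((hd y).differentiableAt).differentiableWithinAt
    · intro y hy
      rw [interior_Ici] at hy
      rw [(hd y).deriv]
      exact mul_nonneg (le_of_lt hy) (Real.sinh_nonneg_iff.mpr (le_of_lt hy))
  have h0 := hmono (Set.self_mem_Ici) hx hx
  simp at h0
  linarith

lemma aux_cosh_one_le_two : Real.cosh 1 ≤ 2 := by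
  rw [Real.cosh_eq]
  have h1 : Real.exp 1 < 2.7182818286 := Real.exp_one_lt_d9
  have h2 : Real.exp (-1) = (Real.exp 1)⁻¹ := Real.exp_neg 1
  have h3 : (1 : ℝ) < Real.exp 1 := by
    have := Real.exp_one_gt_d9; linarith
  rw [h2]
  have h4 : 0 < Real.exp 1 := Real.exp_pos 1
  have h5 : (Real.exp 1)⁻¹ ≤ 1 := by
    rw [inv_le_one_iff₀]; right; linarith
  nlinarith

/-- `cosh y ≤ 1 + y ^ 2` for `|y| ≤ 1`. -/
lemma aux_cosh_le_one_add_sq {y : ℝ} (hy : |y| ≤ 1) : Real.cosh y ≤ 1 + y ^ 2 := by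
  have key : ∀ z : ℝ, 0 ≤ z → z ≤ 1 → Real.cosh z ≤ 1 + z ^ 2 := by
    intro z hz0 hz1
    have hmono : MonotoneOn (fun y : ℝ => 1 + y ^ 2 - Real.cosh y) (Set.Icc 0 1) := by
      have hd : ∀ y : ℝ, HasDerivAt (fun y : ℝ => 1 + y ^ 2 - Real.cosh y)
          (2 * y - Real.sinh y) y := by
        intro y
        have h1 := ((hasDerivAt_const y (1:ℝ)).add ((hasDerivAt_pow 2 y))).sub
          (Real.hasDerivAt_cosh y)
        have : (0:ℝ) + 2 * y ^ 1 - Real.sinh y = 2 * y - Real.sinh y := by ring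
        simp [this] at h1
        exact h1
      refine monotoneOn_of_deriv_nonneg (convex_Icc 0 1) ?_ ?_ ?_
      · exact (Continuous.sub (continuous_const.add (continuous_pow 2))
          Real.continuous_cosh).continuousOn
      · intro y _
        exact ((hd y).differentiableAt).differentiableWithinAt
      · intro y hy
        rw [interior_Icc] at hy
        rw [(hd y).deriv]
        have hy0 : 0 ≤ y := le_of_lt hy.1
        have h1 : Real.sinh y ≤ y * Real.cosh y := aux_sinh_le_mul_cosh hy0
        have h2 : Real.cosh y ≤ Real.cosh 1 := by
          rw [Real.cosh_le_cosh]
          rw [abs_of_nonneg hy0, abs_one]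
          exact le_of_lt hy.2
        have h3 := aux_cosh_one_le_two
        nlinarith
    have h0 := hmono (Set.left_mem_Icc.mpr zero_le_one) (Set.mem_Icc.mpr ⟨hz0, hz1⟩) hz0
    simp at h0
    linarith
  rcases abs_le.mp hy with ⟨h1, h2⟩
  rcases le_or_gt 0 y with h | h
  · exact key y h h2
  · have := key (-y) (by linarith) (by linarith)
    simpa using this



/-- `r ↦ cosh (l * √r)` is convex on `[0, ∞)`. -/
lemma aux_convexOn_cosh_sqrt {l : ℝ} (hl : 0 ≤ l) :
    ConvexOn ℝ (Set.Ici 0) (fun r : ℝ => Real.cosh (l * Real.sqrt r)) := by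
  refine convexOn_of_hasDerivWithinAt2_nonneg (convex_Ici 0)
    (f' := fun r => l / 2 * (Real.sinh (l * Real.sqrt r) * (Real.sqrt r)⁻¹))
    (f'' := fun r => l / (4 * r * Real.sqrt r) *
      (l * Real.sqrt r * Real.cosh (l * Real.sqrt r) - Real.sinh (l * Real.sqrt r)))
    ?_ ?_ ?_ ?_
  · exact (Real.continuous_cosh.comp (continuous_const.mul Real.continuous_sqrt)).continuousOn
  · intro r hr
    rw [interior_Ici] at hr
    have hr0 : (0:ℝ) < r := hr
    have ha : (0:ℝ) < Real.sqrt r := Real.sqrt_pos.mpr hr0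
    have hg : HasDerivAt (fun r : ℝ => l * Real.sqrt r) (l * (1 / (2 * Real.sqrt r))) r :=
      (Real.hasDerivAt_sqrt hr0.ne').const_mul l
    have h1 : HasDerivAt (fun r : ℝ => Real.cosh (l * Real.sqrt r))
        (Real.sinh (l * Real.sqrt r) * (l * (1 / (2 * Real.sqrt r)))) r :=
      hg.cosh
    have heq : Real.sinh (l * Real.sqrt r) * (l * (1 / (2 * Real.sqrt r)))
        = l / 2 * (Real.sinh (l * Real.sqrt r) * (Real.sqrt r)⁻¹) := by
      field_simp
    rw [heq] at h1
    exact h1.hasDerivWithinAt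
  · intro r hr
    rw [interior_Ici] at hr
    have hr0 : (0:ℝ) < r := hr
    have ha : (0:ℝ) < Real.sqrt r := Real.sqrt_pos.mpr hr0
    have hsq : Real.sqrt r * Real.sqrt r = r := Real.mul_self_sqrt hr0.le
    have hg : HasDerivAt (fun r : ℝ => l * Real.sqrt r) (l * (1 / (2 * Real.sqrt r))) r :=
      (Real.hasDerivAt_sqrt hr0.ne').const_mul l
    have hs : HasDerivAt (fun r : ℝ => Real.sinh (l * Real.sqrt r))
        (Real.cosh (l * Real.sqrt r) * (l * (1 / (2 * Real.sqrt r)))) r :=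
      hg.sinh
    have hinv : HasDerivAt (fun r : ℝ => (Real.sqrt r)⁻¹)
        (-(1 / (2 * Real.sqrt r)) / (Real.sqrt r ^ 2)) r :=
      (Real.hasDerivAt_sqrt hr0.ne').inv ha.ne'
    have h2 := ((hs.mul hinv).const_mul (l / 2))
    have heq : (l / 2) * (Real.cosh (l * Real.sqrt r) * (l * (1 / (2 * Real.sqrt r))) *
          (Real.sqrt r)⁻¹ + Real.sinh (l * Real.sqrt r) *
          (-(1 / (2 * Real.sqrt r)) / (Real.sqrt r ^ 2)))
        = l / (4 * r * Real.sqrt r) *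
          (l * Real.sqrt r * Real.cosh (l * Real.sqrt r) - Real.sinh (l * Real.sqrt r)) := by
      obtain ⟨a, ha0, rfl⟩ : ∃ a : ℝ, 0 < a ∧ r = a * a := ⟨Real.sqrt r, ha, hsq.symm⟩
      simp only [Real.sqrt_mul_self ha0.le]
      field_simp
      ring
    rw [heq] at h2
    exact h2.hasDerivWithinAt
  · intro r hr
    rw [interior_Ici] at hr
    have hr0 : (0:ℝ) < r := hr
    have ha : (0:ℝ) < Real.sqrt r := Real.sqrt_pos.mpr hr0
    have h1 : Real.sinh (l * Real.sqrt r) ≤ l * Real.sqrt r * Real.cosh (l * Real.sqrt r) :=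
      aux_sinh_le_mul_cosh (mul_nonneg hl ha.le)
    have h2 : 0 ≤ l / (4 * r * Real.sqrt r) :=
      div_nonneg hl (by positivity)
    exact mul_nonneg h2 (by linarith)



/-- Key pointwise estimate. -/
lemma aux_pointwise {H : Type} [NormedAddCommGroup H] [InnerProductSpace ℝ H]
    {M l : ℝ} (hM : 0 < M) (hl : 0 ≤ l) (y x : H) (hx : ‖x‖ ≤ M) :
    Real.cosh (l * ‖y + x‖) ≤ Real.cosh (l * ‖y‖) * Real.cosh (l * M) +
      (Real.cosh (l * (‖y‖ + M)) - Real.cosh (l * (‖y‖ - M))) / (2 * ‖y‖ * M)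
        * (inner ℝ y x : ℝ) := by
  by_cases hy : y = 0
  · subst hy
    simp only [zero_add, norm_zero, mul_zero, Real.cosh_zero, one_mul, inner_zero_left,
      mul_zero, add_zero]
    rw [Real.cosh_le_cosh, abs_of_nonneg (by positivity), abs_of_nonneg (by positivity)]
    exact mul_le_mul_of_nonneg_left hx hl
  · set a : ℝ := ‖y‖ with ha_def
    have ha : 0 < a := norm_pos_iff.mpr hy
    set u : ℝ := (inner ℝ y x : ℝ) with hu_def
    have hu : |u| ≤ a * M := le_trans (abs_real_inner_le_norm y x)
      (mul_le_mul_of_nonneg_left hx (norm_nonneg y))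
    have hu1 : -(a * M) ≤ u := (abs_le.mp hu).1
    have hu2 : u ≤ a * M := (abs_le.mp hu).2
    set c : ℝ := 2 * a * M with hc_def
    have hc : 0 < c := by positivity
    set θ : ℝ := (c - 2 * u) / (2 * c) with hθ_def
    have hθ0 : 0 ≤ θ := by
      apply div_nonneg _ (by positivity)
      simp only [hc_def]; linarith
    have hθ0' : 0 ≤ 1 - θ := by
      rw [hθ_def]
      rw [sub_nonneg, div_le_one (by positivity)]
      simp only [hc_def]; linarith
    have hθ1 : θ + (1 - θ) = 1 := by ring
    set A : ℝ := Real.cosh (l * (a - M)) with hA_def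
    set B : ℝ := Real.cosh (l * (a + M)) with hB_def
    -- step 1 : cosh (l ‖y+x‖) ≤ cosh (l √(a² + M² + 2u))
    have hsq : ‖y + x‖ ^ 2 ≤ a ^ 2 + M ^ 2 + 2 * u := by
      rw [norm_add_sq_real]
      have : ‖x‖ ^ 2 ≤ M ^ 2 := by nlinarith [norm_nonneg x]
      simp only [← ha_def, ← hu_def]
      nlinarith
    have hR0 : (0:ℝ) ≤ a ^ 2 + M ^ 2 + 2 * u := le_trans (sq_nonneg _) hsq
    have step1 : Real.cosh (l * ‖y + x‖) ≤
        Real.cosh (l * Real.sqrt (a ^ 2 + M ^ 2 + 2 * u)) := by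
      rw [Real.cosh_le_cosh, abs_of_nonneg (by positivity), abs_of_nonneg (by positivity)]
      apply mul_le_mul_of_nonneg_left _ hl
      rw [show ‖y + x‖ = Real.sqrt (‖y + x‖ ^ 2) from (Real.sqrt_sq (norm_nonneg _)).symm]
      exact Real.sqrt_le_sqrt hsq
    -- step 2 : convexity chord bound
    have hcomb : θ * (a - M) ^ 2 + (1 - θ) * (a + M) ^ 2 = a ^ 2 + M ^ 2 + 2 * u := by
      rw [hθ_def, hc_def]
      field_simp
      ring
    have step2 : Real.cosh (l * Real.sqrt (a ^ 2 + M ^ 2 + 2 * u)) ≤ θ * A + (1 - θ) * B := by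
      have h := (aux_convexOn_cosh_sqrt hl).2 (Set.mem_Ici.mpr (sq_nonneg (a - M)))
        (Set.mem_Ici.mpr (sq_nonneg (a + M))) hθ0 hθ0' hθ1
      simp only [smul_eq_mul] at h
      rw [hcomb] at h
      rw [Real.sqrt_sq_eq_abs, Real.sqrt_sq_eq_abs] at h
      rw [show l * |a - M| = |l * (a - M)| by rw [abs_mul, abs_of_nonneg hl]] at h
      rw [show l * |a + M| = |l * (a + M)| by rw [abs_mul, abs_of_nonneg hl]] at h
      rw [Real.cosh_abs, Real.cosh_abs] at h
      exact h
    -- step 3 : rewrite the chord value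
    have hAB : A + B = 2 * Real.cosh (l * a) * Real.cosh (l * M) := by
      rw [hA_def, hB_def, mul_sub, mul_add, Real.cosh_sub, Real.cosh_add]
      ring
    have step3 : θ * A + (1 - θ) * B =
        Real.cosh (l * a) * Real.cosh (l * M) + (B - A) / (2 * a * M) * u := by
      have : θ * A + (1 - θ) * B = (A + B) / 2 + 2 * u * (B - A) / (2 * c) := by
        rw [hθ_def]
        field_simp
        ring
      rw [this, hAB, hc_def]
      field_simp
    calc Real.cosh (l * ‖y + x‖) ≤ θ * A + (1 - θ) * B := le_trans step1 step2
      _ = _ := by rw [step3]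




/-- One-step integral estimate. -/
lemma aux_integral_step {H : Type} [NormedAddCommGroup H] [InnerProductSpace ℝ H]
    [CompleteSpace H] [MeasurableSpace H] [BorelSpace H] [SecondCountableTopology H]
    (ν : Measure H) [IsProbabilityMeasure ν] {M l : ℝ} (hM : 0 < M) (hl : 0 ≤ l)
    (hbd : ∀ᵐ x ∂ν, ‖x‖ ≤ M) (hmean : ∫ x, x ∂ν = 0) (y : H) :
    ∫ x, Real.cosh (l * ‖y + x‖) ∂ν ≤ Real.cosh (l * ‖y‖) * Real.cosh (l * M) := by
  set K : ℝ := (Real.cosh (l * (‖y‖ + M)) - Real.cosh (l * (‖y‖ - M))) / (2 * ‖y‖ * M) with hK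
  have hmeas_f : AEStronglyMeasurable (fun x : H => Real.cosh (l * ‖y + x‖)) ν :=
    (Real.continuous_cosh.comp (continuous_const.mul
      ((continuous_const.add continuous_id).norm))).aestronglyMeasurable
  have hint_f : Integrable (fun x : H => Real.cosh (l * ‖y + x‖)) ν := by
    refine Integrable.mono' (integrable_const (Real.cosh (l * (‖y‖ + M)))) hmeas_f ?_
    filter_upwards [hbd] with x hx
    rw [Real.norm_eq_abs, abs_of_pos (Real.cosh_pos _), Real.cosh_le_cosh,
      abs_of_nonneg (by positivity), abs_of_nonneg (by positivity)]
    exact mul_le_mul_of_nonneg_left (le_trans (norm_add_le y x) (by linarith)) hl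
  have hint_id : Integrable (fun x : H => x) ν := by
    refine Integrable.mono' (integrable_const M) aestronglyMeasurable_id ?_
    exact hbd
  have hint_inner : Integrable (fun x : H => K * (inner ℝ y x : ℝ)) ν := by
    have h1 : Integrable (fun x : H => (inner ℝ y x : ℝ)) ν :=
      (innerSL ℝ y).integrable_comp hint_id
    exact h1.const_mul K
  have hint_g : Integrable
      (fun x : H => Real.cosh (l * ‖y‖) * Real.cosh (l * M) + K * (inner ℝ y x : ℝ)) ν :=
    (integrable_const _).add hint_inner
  have hmono := integral_mono_ae hint_f hint_g (by
    filter_upwards [hbd] with x hx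
    exact aux_pointwise hM hl y x hx)
  rw [integral_add (integrable_const _) hint_inner, integral_const] at hmono
  rw [integral_const_mul, integral_inner hint_id, hmean, inner_zero_right, mul_zero,
    add_zero] at hmono
  simpa using hmono




/-- mgf-type bound for the partial sums. -/
lemma aux_sum_bound {H : Type} [NormedAddCommGroup H] [InnerProductSpace ℝ H]
    [CompleteSpace H] [MeasurableSpace H] [BorelSpace H] [SecondCountableTopology H]
    {Ω : Type} [MeasurableSpace Ω] (P : Measure Ω) [IsProbabilityMeasure P]
    {n : ℕ} (ξ : Fin n → Ω → H) (hmeas : ∀ i, Measurable (ξ i))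
    (hindep : iIndepFun ξ P)
    (hmean : ∀ i, (∫ ω, ξ i ω ∂P) = 0)
    {M l : ℝ} (hM : 0 < M) (hl : 0 ≤ l) (hbdd : ∀ i, ∀ᵐ ω ∂P, ‖ξ i ω‖ ≤ M)
    (s : Finset (Fin n)) :
    ∫ ω, Real.cosh (l * ‖∑ i ∈ s, ξ i ω‖) ∂P ≤ Real.cosh (l * M) ^ s.card := by
  classical
  induction s using Finset.induction_on with
  | empty => simp
  | @insert i s hi IH =>
    set Y : Ω → H := fun ω => ∑ j ∈ s, ξ j ω with hY_def
    have hY : Measurable Y := Finset.measurable_sum s (fun j _ => hmeas j)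
    have hYsum : (∑ j ∈ s, ξ j) = Y := by
      funext ω; simp [hY_def]
    have hInd : IndepFun Y (ξ i) P := by
      have := hindep.indepFun_finset_sum_of_notMem hmeas hi
      rwa [hYsum] at this
    have hmap : P.map (fun ω => (Y ω, ξ i ω)) = (P.map Y).prod (P.map (ξ i)) :=
      (indepFun_iff_map_prod_eq_prod_map_map hY.aemeasurable (hmeas i).aemeasurable).mp hInd
    set μ : Measure H := P.map Y with hμ_def
    set ν : Measure H := P.map (ξ i) with hν_def
    haveI : IsProbabilityMeasure μ := Measure.isProbabilityMeasure_map hY.aemeasurable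
    haveI : IsProbabilityMeasure ν := Measure.isProbabilityMeasure_map (hmeas i).aemeasurable
    have hbdν : ∀ᵐ x ∂ν, ‖x‖ ≤ M := by
      rw [hν_def, ae_map_iff (hmeas i).aemeasurable
        (measurableSet_le measurable_norm measurable_const)]
      exact hbdd i
    have hbdY : ∀ᵐ ω ∂P, ‖Y ω‖ ≤ s.card * M := by
      have hA : ∀ᵐ ω ∂P, ∀ j ∈ s, ‖ξ j ω‖ ≤ M :=
        (MeasureTheory.ae_ball_iff s.countable_toSet).mpr fun j _ => hbdd j
      filter_upwards [hA] with ω hω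
      calc ‖Y ω‖ ≤ ∑ j ∈ s, ‖ξ j ω‖ := norm_sum_le s _
        _ ≤ s.card • M := Finset.sum_le_card_nsmul s _ M hω
        _ = s.card * M := nsmul_eq_mul _ _
    have hbdμ : ∀ᵐ y ∂μ, ‖y‖ ≤ s.card * M := by
      rw [hμ_def, ae_map_iff hY.aemeasurable
        (measurableSet_le measurable_norm measurable_const)]
      exact hbdY
    have hmeanν : ∫ x, x ∂ν = 0 := by
      have h7 : ∫ x, x ∂ν = ∫ ω, ξ i ω ∂P :=
        integral_map (f := fun x : H => x) (hmeas i).aemeasurable aestronglyMeasurable_id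
      rw [h7]; exact hmean i
    -- rewrite the LHS
    have hrw : ∀ ω, (∑ j ∈ insert i s, ξ j ω) = Y ω + ξ i ω := by
      intro ω
      rw [Finset.sum_insert hi, add_comm]
    set g : H × H → ℝ := fun p => Real.cosh (l * ‖p.1 + p.2‖) with hg_def
    have hg_cont : Continuous g :=
      Real.continuous_cosh.comp (continuous_const.mul
        ((continuous_fst.add continuous_snd).norm))
    have E1 : ∫ ω, Real.cosh (l * ‖∑ j ∈ insert i s, ξ j ω‖) ∂P = ∫ p, g p ∂(μ.prod ν) := by
      rw [hμ_def, hν_def, ← hmap,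
        integral_map (hY.prodMk (hmeas i)).aemeasurable hg_cont.aestronglyMeasurable]
      simp only [hg_def]
      congr 1
      funext ω
      rw [hrw ω]
    have hprod_ae : ∀ᵐ p ∂(μ.prod ν), ‖p.1‖ ≤ s.card * M ∧ ‖p.2‖ ≤ M :=
      ((Measure.quasiMeasurePreserving_fst).ae hbdμ).and
        ((Measure.quasiMeasurePreserving_snd).ae hbdν)
    have hint_prod : Integrable g (μ.prod ν) := by
      refine Integrable.mono' (integrable_const (Real.cosh (l * (s.card * M + M))))
        hg_cont.aestronglyMeasurable ?_
      filter_upwards [hprod_ae] with p hp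
      rw [Real.norm_eq_abs, abs_of_pos (Real.cosh_pos _), Real.cosh_le_cosh,
        abs_of_nonneg (by positivity), abs_of_nonneg (by positivity)]
      refine mul_le_mul_of_nonneg_left ?_ hl
      calc ‖p.1 + p.2‖ ≤ ‖p.1‖ + ‖p.2‖ := norm_add_le _ _
        _ ≤ s.card * M + M := add_le_add hp.1 hp.2
    have E2 : ∫ p, g p ∂(μ.prod ν) = ∫ y, ∫ x, g (y, x) ∂ν ∂μ :=
      integral_prod g hint_prod
    have E3 : ∀ y : H, ∫ x, g (y, x) ∂ν ≤ Real.cosh (l * ‖y‖) * Real.cosh (l * M) := by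
      intro y
      exact aux_integral_step ν hM hl hbdν hmeanν y
    have hint_marginal : Integrable (fun y => ∫ x, g (y, x) ∂ν) μ :=
      hint_prod.integral_prod_left
    have hint_rhs : Integrable (fun y : H => Real.cosh (l * ‖y‖) * Real.cosh (l * M)) μ := by
      refine Integrable.mono' (integrable_const (Real.cosh (l * (s.card * M)) *
        Real.cosh (l * M)))
        ((Real.continuous_cosh.comp (continuous_const.mul
          continuous_norm)).mul continuous_const).aestronglyMeasurable ?_
      filter_upwards [hbdμ] with y hy
      rw [Real.norm_eq_abs, abs_of_pos (mul_pos (Real.cosh_pos _) (Real.cosh_pos _))]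
      refine mul_le_mul_of_nonneg_right ?_ (Real.cosh_pos _).le
      rw [Real.cosh_le_cosh, abs_of_nonneg (by positivity), abs_of_nonneg (by positivity)]
      exact mul_le_mul_of_nonneg_left hy hl
    have E4 : ∫ y, ∫ x, g (y, x) ∂ν ∂μ ≤
        ∫ y, Real.cosh (l * ‖y‖) * Real.cosh (l * M) ∂μ :=
      integral_mono_ae hint_marginal hint_rhs (Filter.Eventually.of_forall E3)
    have E5 : ∫ y, Real.cosh (l * ‖y‖) * Real.cosh (l * M) ∂μ =
        (∫ y, Real.cosh (l * ‖y‖) ∂μ) * Real.cosh (l * M) := integral_mul_const _ _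
    have hcont2 : Continuous (fun y : H => Real.cosh (l * ‖y‖)) :=
      Real.continuous_cosh.comp (continuous_const.mul continuous_norm)
    have E6 : ∫ y, Real.cosh (l * ‖y‖) ∂μ = ∫ ω, Real.cosh (l * ‖Y ω‖) ∂P :=
      integral_map (f := fun y : H => Real.cosh (l * ‖y‖)) hY.aemeasurable
        hcont2.aestronglyMeasurable
    have hfinal : ∫ ω, Real.cosh (l * ‖∑ j ∈ insert i s, ξ j ω‖) ∂P ≤
        Real.cosh (l * M) ^ s.card * Real.cosh (l * M) := by
      rw [E1, E2]
      refine le_trans E4 ?_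
      rw [E5, E6]
      exact mul_le_mul_of_nonneg_right IH (Real.cosh_pos _).le
    rw [Finset.card_insert_of_notMem hi, pow_succ]
    exact hfinal


theorem stmt_18 {H : Type} [NormedAddCommGroup H] [InnerProductSpace ℝ H]
    [CompleteSpace H] [TopologicalSpace.SeparableSpace H]
    [MeasurableSpace H] [BorelSpace H]
    {Ω : Type} [MeasurableSpace Ω] (P : Measure Ω) [IsProbabilityMeasure P]
    {n : ℕ} (ξ : Fin n → Ω → H) (hmeas : ∀ i, Measurable (ξ i))
    (hindep : iIndepFun ξ P)
    (hmean : ∀ i, (∫ ω, ξ i ω ∂P) = 0)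
    (M : ℝ) (hM : 0 < M) (hbdd : ∀ i, ∀ᵐ ω ∂P, ‖ξ i ω‖ ≤ M)
    (t : ℝ) (ht : 0 < t) :
    P {ω | t ≤ ‖(n : ℝ)⁻¹ • ∑ i, ξ i ω‖} ≤
      ENNReal.ofReal (2 * Real.exp (-((n : ℝ) * t ^ 2) / (4 * M ^ 2))) := by
  haveI : SecondCountableTopology H := UniformSpace.secondCountable_of_separable H
  set S : Ω → H := fun ω => ∑ i, ξ i ω with hS_def
  have hS : Measurable S := Finset.measurable_sum Finset.univ (fun j _ => hmeas j)
  have hbdS : ∀ᵐ ω ∂P, ‖S ω‖ ≤ n * M := by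
    have hA : ∀ᵐ ω ∂P, ∀ j, ‖ξ j ω‖ ≤ M := ae_all_iff.mpr hbdd
    filter_upwards [hA] with ω hω
    calc ‖S ω‖ ≤ ∑ j, ‖ξ j ω‖ := norm_sum_le _ _
      _ ≤ Finset.univ.card • M := Finset.sum_le_card_nsmul _ _ M (fun j _ => hω j)
      _ = n * M := by simp [nsmul_eq_mul]
  have hnorm_smul : ∀ ω, ‖(n : ℝ)⁻¹ • S ω‖ = (n : ℝ)⁻¹ * ‖S ω‖ := by
    intro ω
    rw [norm_smul, Real.norm_eq_abs, abs_of_nonneg (by positivity)]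
  by_cases hcase : t ≤ M
  · -- main case
    set l : ℝ := t / (2 * M ^ 2) with hl_def
    have hl : 0 ≤ l := by positivity
    have hsum := aux_sum_bound P ξ hmeas hindep hmean hM hl hbdd Finset.univ
    rw [Finset.card_univ, Fintype.card_fin] at hsum
    set f : Ω → ℝ := fun ω => Real.cosh (l * ‖S ω‖) with hf_def
    have hf_meas : AEStronglyMeasurable f P :=
      (Real.measurable_cosh.comp ((measurable_norm.comp hS).const_mul l)).aestronglyMeasurable
    have hf_int : Integrable f P := by
      refine Integrable.mono' (integrable_const (Real.cosh (l * (n * M)))) hf_meas ?_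
      filter_upwards [hbdS] with ω hω
      rw [Real.norm_eq_abs, abs_of_pos (Real.cosh_pos _), Real.cosh_le_cosh,
        abs_of_nonneg (by positivity), abs_of_nonneg (by positivity)]
      exact mul_le_mul_of_nonneg_left hω hl
    set ε : ℝ := Real.exp (l * (n * t)) / 2 with hε_def
    have hε : 0 < ε := by positivity
    have hsubset : {ω | t ≤ ‖(n : ℝ)⁻¹ • S ω‖} ⊆ {ω | ε ≤ f ω} := by
      intro ω hω
      simp only [Set.mem_setOf_eq] at hω ⊢
      rw [hnorm_smul ω] at hω
      have hn : 0 < (n : ℝ) := by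
        by_contra hn
        push_neg at hn
        have : (n : ℝ) = 0 := le_antisymm hn (Nat.cast_nonneg n)
        rw [this] at hω
        simp at hω
        linarith
      have h1 : (n : ℝ) * t ≤ ‖S ω‖ := by
        rw [inv_mul_eq_div, le_div_iff₀ hn] at hω
        linarith
      calc ε ≤ Real.cosh (l * (n * t)) := by
            rw [hε_def, Real.cosh_eq]
            have := Real.exp_pos (-(l * (n * t)))
            linarith
        _ ≤ f ω := by
            rw [hf_def, Real.cosh_le_cosh, abs_of_nonneg (by positivity),
              abs_of_nonneg (by positivity)]
            exact mul_le_mul_of_nonneg_left h1 hl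
    have hmarkov := mul_meas_ge_le_integral_of_nonneg
      (Filter.Eventually.of_forall (fun ω => (Real.cosh_pos (l * ‖S ω‖)).le)) hf_int ε
    have h2 : (P {ω | t ≤ ‖(n : ℝ)⁻¹ • S ω‖}).toReal ≤ (P {ω | ε ≤ f ω}).toReal :=
      ENNReal.toReal_mono (measure_ne_top P _) (measure_mono hsubset)
    have h3 : (P {ω | ε ≤ f ω}).toReal ≤ Real.cosh (l * M) ^ n / ε := by
      rw [le_div_iff₀ hε]
      calc (P {ω | ε ≤ f ω}).toReal * ε = ε * (P {ω | ε ≤ f ω}).toReal := by ring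
        _ ≤ ∫ ω, f ω ∂P := hmarkov
        _ ≤ Real.cosh (l * M) ^ n := hsum
    -- bound cosh (l M) ^ n
    have hlM : |l * M| ≤ 1 := by
      rw [abs_of_nonneg (by positivity), hl_def]
      rw [div_mul_eq_mul_div, div_le_one (by positivity)]
      nlinarith
    have h4 : Real.cosh (l * M) ^ n ≤ Real.exp ((n : ℝ) * (l * M) ^ 2) := by
      calc Real.cosh (l * M) ^ n ≤ (Real.exp ((l * M) ^ 2)) ^ n := by
            apply pow_le_pow_left₀ (Real.cosh_pos _).le
            calc Real.cosh (l * M) ≤ 1 + (l * M) ^ 2 := aux_cosh_le_one_add_sq hlM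
              _ ≤ Real.exp ((l * M) ^ 2) := by
                  have := Real.add_one_le_exp ((l * M) ^ 2)
                  linarith
        _ = Real.exp ((n : ℝ) * (l * M) ^ 2) := by
            rw [← Real.exp_nat_mul]
    have h5 : Real.cosh (l * M) ^ n / ε ≤
        2 * Real.exp (-((n : ℝ) * t ^ 2) / (4 * M ^ 2)) := by
      rw [hε_def, div_div_eq_mul_div, div_le_iff₀ (by positivity)]
      calc Real.cosh (l * M) ^ n * 2 ≤ Real.exp ((n : ℝ) * (l * M) ^ 2) * 2 := by
            nlinarith
        _ = 2 * Real.exp (-((n : ℝ) * t ^ 2) / (4 * M ^ 2)) * Real.exp (l * (n * t)) := by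
            rw [mul_comm, mul_assoc, ← Real.exp_add]
            congr 2
            rw [hl_def]
            field_simp
            ring
    have hfinal : (P {ω | t ≤ ‖(n : ℝ)⁻¹ • S ω‖}).toReal ≤
        2 * Real.exp (-((n : ℝ) * t ^ 2) / (4 * M ^ 2)) :=
      le_trans h2 (le_trans h3 h5)
    calc P {ω | t ≤ ‖(n : ℝ)⁻¹ • S ω‖}
        = ENNReal.ofReal (P {ω | t ≤ ‖(n : ℝ)⁻¹ • S ω‖}).toReal :=
          (ENNReal.ofReal_toReal (measure_ne_top P _)).symm
      _ ≤ ENNReal.ofReal (2 * Real.exp (-((n : ℝ) * t ^ 2) / (4 * M ^ 2))) :=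
          ENNReal.ofReal_le_ofReal hfinal
  · -- trivial case t > M : the event is null
    push_neg at hcase
    have hnull : P {ω | t ≤ ‖(n : ℝ)⁻¹ • S ω‖} = 0 := by
      rw [MeasureTheory.measure_eq_zero_iff_ae_notMem]
      filter_upwards [hbdS] with ω hω
      simp only [Set.mem_setOf_eq, not_le]
      rw [hnorm_smul ω]
      have h1 : (n : ℝ)⁻¹ * ‖S ω‖ ≤ (n : ℝ)⁻¹ * ((n : ℝ) * M) :=
        mul_le_mul_of_nonneg_left hω (by positivity)
      have h2 : (n : ℝ)⁻¹ * ((n : ℝ) * M) ≤ M := by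
        rcases Nat.eq_zero_or_pos n with hn | hn
        · simp [hn, hM.le]
        · have : (0:ℝ) < n := by exact_mod_cast hn
          rw [← mul_assoc, inv_mul_cancel₀ this.ne', one_mul]
      linarith
    rw [hnull]
    exact zero_le

end
end
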